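/- arXiv:2211.13456 — 3 statements merged into one kernel-verified Lean document; each statement's English description precedes it below -/
import Mathlib

section
/- Suppose W ⊆ V⊗ℝ^ℓ is a geometric space and set α = −κ′(1)/log m. Then: (1) for every v ∈ 𝕄^W one has (1/m)∑_{j=1}^m (1+v_j)·log(1+v_j) ≤ α·log m (with the convention 0·log 0 = 0); and (2) m^{1−α} is a positive integer and there exist v ∈ 𝕄^W and a set H ⊆ {1,…,m} with |H| = m^{1−α} such that v_j = m^α − 1 for j ∈ H and v_j = −1 for j ∉ H; for this v the inequality in (1) is an equality. -/
open MeasureTheory Finset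

noncomputable section

namespace TracePaper

variable {ι : Type} [Fintype ι]
variable {E : Type} [AddCommGroup E] [Module ℝ E]

/-- A martingale adapted to the `ι`-uniform filtration, recorded by its values on atoms:
`val n c` is the value of `F_n` on the atom determined by the digit string `c`. -/
structure Mart (ι : Type) [Fintype ι] (E : Type) [AddCommGroup E] [Module ℝ E] where
  val : (n : ℕ) → (Fin n → ι) → E
  avg_eq : ∀ (n : ℕ) (c : Fin n → ι),
    val n c = (Fintype.card ι : ℝ)⁻¹ • ∑ j : ι, val (n + 1) (Fin.snoc c j)

/-- The martingale difference `dF_{n+1}|_ω` on the atom `ω = c ∈ 𝒜ℱ_n`, as an element of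
`V ⊗ E` (an `ι`-tuple with zero average). -/
def diff (F : Mart ι E) (n : ℕ) (c : Fin n → ι) : ι → E :=
  fun j => F.val (n + 1) (Fin.snoc c j) - F.val n c

/-- `F ∈ 𝕎`: all martingale differences lie in `W`. -/
def MemSpace (W : Set (ι → E)) (F : Mart ι E) : Prop :=
  ∀ (n : ℕ) (c : Fin n → ι), diff F n c ∈ W

/-- A simple martingale: all but finitely many differences vanish. -/
def Simple (F : Mart ι E) : Prop :=
  ∃ N : ℕ, ∀ n, N ≤ n → ∀ c : Fin n → ι, diff F n c = 0

/-- Average of an `ι`-tuple. -/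
def avg (X : ι → E) : E := (Fintype.card ι : ℝ)⁻¹ • ∑ j, X j

/-- The set `𝕄^W` of admissible `0`-flat increments. -/
def MW (W : Set (ι → E)) : Set (ι → ℝ) :=
  {v | (∑ j, v j = 0) ∧ (∀ j, -1 ≤ v j) ∧ ∃ a : E, a ≠ 0 ∧ (fun j => v j • a) ∈ W}

/-- `κ_v(θ) = θ log((1/m) ∑_j |1+v_j|^{1/θ})`, extended by continuity at `θ = 0`. -/
def kappaV (ι : Type) [Fintype ι] (v : ι → ℝ) (θ : ℝ) : ℝ :=
  if θ = 0 then Real.log (⨆ j, |1 + v j|)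
  else θ * Real.log ((Fintype.card ι : ℝ)⁻¹ * ∑ j, |1 + v j| ^ (1 / θ))

/-- `κ(θ) = sup {κ_v(θ) : v ∈ 𝕄^W}`. -/
def kappa (W : Set (ι → E)) (θ : ℝ) : ℝ :=
  sSup {r | ∃ v ∈ MW W, r = kappaV ι v θ}

/-- `κ'(1) = inf { -(1/m) ∑_j (1+v_j) log(1+v_j) : v ∈ 𝕄^W }`. -/
def kprime1 (W : Set (ι → E)) : ℝ :=
  sInf {r | ∃ v ∈ MW W,
    r = -((Fintype.card ι : ℝ)⁻¹ * ∑ j, (1 + v j) * Real.log (1 + v j))}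

/-- `W` is geometric (κ affine) with `α = -κ'(1)/log m`; equivalently
`κ(θ) = α (log m)(1-θ)` on `[0,1]`. -/
def GeometricOfOrder (W : Set (ι → E)) (α : ℝ) : Prop :=
  ∀ θ ∈ Set.Icc (0 : ℝ) 1, kappa W θ = α * Real.log (Fintype.card ι) * (1 - θ)

/-- `w = v ⊗ a` is an extremal vector with support `H`. -/
def IsExtremal (W : Set (ι → E)) (α : ℝ) (w : ι → E) (H : Finset ι) : Prop :=
  w ∈ W ∧ ∃ a : E, a ≠ 0 ∧ (H.card : ℝ) = (Fintype.card ι : ℝ) ^ ((1 : ℝ) - α) ∧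
    (∀ j ∈ H, w j = ((Fintype.card ι : ℝ) ^ α - 1) • a) ∧ ∀ j ∉ H, w j = -a

/-- `φ` is a canceling operator. -/
def Canceling (W : Set (ι → E)) (α : ℝ) (φ : (ι → E) → ι → ℝ) : Prop :=
  ∀ (w : ι → E) (H : Finset ι), IsExtremal W α w H → ∀ j ∈ H, φ w j = 0

/-- `W` is a non-local space (of order `α`). -/
def NonLocal (W : Set (ι → E)) (α : ℝ) : Prop :=
  ∀ (w : ι → E) (H : Finset ι), IsExtremal W α w H →
    ∀ u ∈ W, ∀ b : E, (∀ j ∉ H, b + u j = 0) → ∃ c : ℝ, u = c • w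

/-- The martingale transform `𝕀_α[F]`, as a function of the path `γ ∈ 𝕋`. -/
def Ialpha (φ : (ι → E) → ι → ℝ) (α : ℝ) (F : Mart ι E) (γ : ℕ → ι) : ℝ :=
  ∑' n : ℕ, (Fintype.card ι : ℝ) ^ (-(α * n)) *
    φ (diff F n (fun i : Fin n => γ i)) (γ n)

/-- The cylinder (atom of `ℱ_n`) determined by the digit string `c`. -/
def cyl (n : ℕ) (c : Fin n → ι) : Set (ℕ → ι) := {γ | ∀ i : Fin n, γ i = c i}

/-- The Borel σ-algebra of `𝕋` (= the product σ-algebra). -/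
def treeMS (ι : Type) : MeasurableSpace (ℕ → ι) :=
  @MeasurableSpace.pi ℕ (fun _ => ι) (fun _ => ⊤)

section Normed
variable {E' : Type} [NormedAddCommGroup E'] [NormedSpace ℝ E']

/-- `‖F‖_{L¹} = sup_n 𝔼 |F_n|`. -/
def L1Norm (F : Mart ι E') : ℝ :=
  ⨆ n : ℕ, ((Fintype.card ι : ℝ) ^ n)⁻¹ * ∑ c : Fin n → ι, ‖F.val n c‖

/-- The bilinear trace inequality
`∫_𝕋 |𝕀_α[F]| dν ≲ (sup_{n,ω} m^{(1-α)n} ν(ω)) ‖F‖_{L¹}`. -/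
def TraceIneq (W : Set (ι → E')) (φ : (ι → E') → ι → ℝ) (α : ℝ) : Prop :=
  ∃ C : ℝ, ∀ ν : @Measure (ℕ → ι) (treeMS ι), IsFiniteMeasure ν →
    ∀ F : Mart ι E', MemSpace W F → Simple F →
      ∀ A : ℝ,
        (∀ (n : ℕ) (c : Fin n → ι),
          (Fintype.card ι : ℝ) ^ (((1 : ℝ) - α) * n) * (ν (cyl n c)).toReal ≤ A) →
        ∫ γ, |Ialpha φ α F γ| ∂ν ≤ C * A * L1Norm F

/-- The Bellman main inequality for `G` on the Bellman domain. -/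
def MainInequality (W : Set (ι → E')) (φ : (ι → E') → ι → ℝ) (α : ℝ)
    (G : E' → ℝ → ℝ → ℝ → ℝ → ℝ) : Prop :=
  ∀ (X : ι → E') (y : ℝ) (Z T S : ι → ℝ),
    (∀ j, ‖X j‖ ≤ Z j) → (∀ j, 0 ≤ T j) → (∀ j, T j ≤ S j) →
    (fun j => X j - avg X) ∈ W →
    (Fintype.card ι : ℝ) ^ (-α) *
        ∑ j, G (X j) ((Fintype.card ι : ℝ) ^ α * y + φ (fun i => X i - avg X) j)
          (Z j) (T j) (S j)
      ≤ G (avg X) y ((Fintype.card ι : ℝ)⁻¹ * ∑ j, Z j) (∑ j, T j)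
          (max (∑ j, T j) ((Fintype.card ι : ℝ) ^ ((1 : ℝ) - α) * ⨆ j, S j))

/-- The boundary inequality `G(x, y, |x|, t, s) ≥ |y| t`. -/
def BoundaryIneq (G : E' → ℝ → ℝ → ℝ → ℝ → ℝ) : Prop :=
  ∀ (x : E') (y t s : ℝ), 0 ≤ t → t ≤ s → |y| * t ≤ G x y ‖x‖ t s

/-- A supersolution: main inequality + boundary inequality. -/
def Supersolution (W : Set (ι → E')) (φ : (ι → E') → ι → ℝ) (α : ℝ)
    (G : E' → ℝ → ℝ → ℝ → ℝ → ℝ) : Prop :=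
  MainInequality W φ α G ∧ BoundaryIneq G

end Normed

lemma rpow_two' (x : ℝ) : x ^ (2:ℝ) = x^2 := by
  rw [show (2:ℝ) = ((2:ℕ):ℝ) by norm_num, Real.rpow_natCast]

lemma lagrange_identity {n : ℕ} (a b : Fin n → ℝ) :
    ∑ i, ∑ j, (a i * b j - a j * b i)^2
      = 2*((∑ i, a i^2) * (∑ i, b i^2)) - 2*(∑ i, a i * b i)^2 := by
  have h : ∀ i : Fin n, ∑ j, (a i * b j - a j * b i)^2
      = (a i)^2 * (∑ j, (b j)^2) - (a i * b i * 2) * (∑ j, a j * b j)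
        + (b i)^2 * (∑ j, (a j)^2) := by
    intro i
    rw [Finset.mul_sum, Finset.mul_sum, Finset.mul_sum,
      ← Finset.sum_sub_distrib, ← Finset.sum_add_distrib]
    apply Finset.sum_congr rfl
    intro j _
    ring
  rw [Finset.sum_congr rfl (fun i _ => h i), Finset.sum_add_distrib, Finset.sum_sub_distrib,
    ← Finset.sum_mul, ← Finset.sum_mul, ← Finset.sum_mul, ← Finset.sum_mul]
  ring

lemma ptwise {p δ : ℝ} (hp : 0 ≤ p) (hδ : 0 < δ) :
    p + δ * (p * Real.log p) ≤ p ^ (1+δ:ℝ) := by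
  rcases eq_or_lt_of_le hp with h0 | h0
  · rw [← h0, Real.zero_rpow (by positivity : (1+δ:ℝ) ≠ 0), Real.log_zero]
    ring_nf
    exact le_refl 0
  · have h1 : p ^ (1+δ:ℝ) = p * Real.exp (δ * Real.log p) := by
      rw [Real.rpow_add h0, Real.rpow_one, Real.rpow_def_of_pos h0]
      ring_nf
    rw [h1]
    have h2 : δ * Real.log p + 1 ≤ Real.exp (δ * Real.log p) := Real.add_one_le_exp _
    nlinarith

lemma le_of_small (E L : ℝ) (h : ∀ δ : ℝ, 0 < δ → δ * L < 1 → E - L ≤ δ * (E * L)) :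
    E ≤ L := by
  by_contra hcon
  push_neg at hcon
  have hεpos : 0 < E - L := by linarith
  set c := E * L with hc
  have h1 : (0:ℝ) < |c| + 1 := by positivity
  have h2 : (0:ℝ) < |L| + 1 := by positivity
  set δ := min ((E - L)/(2*(|c|+1))) (1/(2*(|L|+1))) with hδdef
  have hδpos : 0 < δ := lt_min (div_pos hεpos (by positivity)) (by positivity)
  have hδL : δ * L < 1 := by
    calc δ * L ≤ δ * |L| := mul_le_mul_of_nonneg_left (le_abs_self _) hδpos.le
    _ ≤ (1/(2*(|L|+1))) * |L| := mul_le_mul_of_nonneg_right (min_le_right _ _) (abs_nonneg _)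
    _ < 1 := by
        rw [div_mul_eq_mul_div, div_lt_one (by positivity)]
        nlinarith [abs_nonneg L]
  have hmain := h δ hδpos hδL
  have hδc : δ * c ≤ (E - L)/2 := by
    calc δ * c ≤ δ * |c| := mul_le_mul_of_nonneg_left (le_abs_self _) hδpos.le
    _ ≤ ((E - L)/(2*(|c|+1))) * |c| :=
        mul_le_mul_of_nonneg_right (min_le_left _ _) (abs_nonneg _)
    _ ≤ (E - L)/2 := by
        rw [div_mul_eq_mul_div, div_le_div_iff₀ (by positivity) (by positivity)]
        nlinarith [abs_nonneg c, hεpos]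
  linarith


set_option maxHeartbeats 2000000 in
/-- Proposition `GeometricStructure`: if `W` is geometric with
`α = -κ'(1)/log m`, then the entropy inequality holds on `𝕄^W`, `m^{1-α}` is a positive
integer, and there is an extremal `v ∈ 𝕄^W` attaining equality. -/
theorem statement7 (m ℓ : ℕ) (hm : 2 ≤ m) (hℓ : 1 ≤ ℓ)
    (W : Submodule ℝ (Fin m → EuclideanSpace ℝ (Fin ℓ)))
    (hWV : ∀ w ∈ W, ∑ j, w j = 0)
    (α : ℝ)
    (hgeom : GeometricOfOrder (W : Set (Fin m → EuclideanSpace ℝ (Fin ℓ))) α) :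
    (∀ v ∈ MW (W : Set (Fin m → EuclideanSpace ℝ (Fin ℓ))),
        (m : ℝ)⁻¹ * ∑ j, (1 + v j) * Real.log (1 + v j) ≤ α * Real.log m) ∧
      ∃ k : ℕ, 0 < k ∧ (k : ℝ) = (m : ℝ) ^ ((1 : ℝ) - α) ∧
        ∃ v ∈ MW (W : Set (Fin m → EuclideanSpace ℝ (Fin ℓ))), ∃ H : Finset (Fin m),
          H.card = k ∧ (∀ j ∈ H, v j = (m : ℝ) ^ α - 1) ∧ (∀ j ∉ H, v j = -1) ∧
          (m : ℝ)⁻¹ * ∑ j, (1 + v j) * Real.log (1 + v j) = α * Real.log m := by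
  classical
  have hm0 : (0:ℝ) < (m:ℝ) := by exact_mod_cast (by omega : 0 < m)
  have hm0' : (m:ℝ) ≠ 0 := ne_of_gt hm0
  have hexp : ∀ x y : ℝ, Real.exp x * Real.exp y = Real.exp (x+y) :=
    fun x y => (Real.exp_add x y).symm
  set Ws : Set (Fin m → EuclideanSpace ℝ (Fin ℓ)) :=
    (W : Set (Fin m → EuclideanSpace ℝ (Fin ℓ))) with hWsdef
  -- basic facts about members of MW
  have hp : ∀ v ∈ MW Ws, ∀ j, (0:ℝ) ≤ 1 + v j := fun v hv j => by linarith [hv.2.1 j]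
  have hsumP : ∀ v ∈ MW Ws, ∑ j, (1 + v j) = (m:ℝ) := by
    intro v hv
    rw [Finset.sum_add_distrib, hv.1, Finset.sum_const, Finset.card_univ, Fintype.card_fin]
    simp
  have hub : ∀ v ∈ MW Ws, ∀ j, 1 + v j ≤ (m:ℝ) := by
    intro v hv j
    calc 1 + v j ≤ ∑ i, (1 + v i) :=
          Finset.single_le_sum (fun i _ => hp v hv i) (Finset.mem_univ j)
    _ = (m:ℝ) := hsumP v hv
  have hex : ∀ v ∈ MW Ws, ∃ j, 1 ≤ 1 + v j := by
    intro v hv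
    by_contra hcon
    push_neg at hcon
    have h1 : ∑ j, v j < ∑ _j : Fin m, (0:ℝ) :=
      Finset.sum_lt_sum_of_nonempty ⟨⟨0, by omega⟩, Finset.mem_univ _⟩
        (fun j _ => by linarith [hcon j])
    rw [hv.1] at h1
    simp at h1
  have hT1 : ∀ v ∈ MW Ws, ∀ s : ℝ, 0 ≤ s → (1:ℝ) ≤ ∑ j, (1 + v j) ^ (s:ℝ) := by
    intro v hv s hs
    obtain ⟨j0, hj0⟩ := hex v hv
    calc (1:ℝ) = (1:ℝ) ^ (s:ℝ) := (Real.one_rpow s).symm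
    _ ≤ (1 + v j0) ^ (s:ℝ) := Real.rpow_le_rpow zero_le_one hj0 hs
    _ ≤ ∑ j, (1 + v j) ^ (s:ℝ) :=
        Finset.single_le_sum (fun j _ => Real.rpow_nonneg (hp v hv j) s) (Finset.mem_univ j0)
  -- the value of κ
  have hκ : ∀ θ : ℝ, 0 < θ → θ ≤ 1 →
      sSup {r | ∃ v ∈ MW Ws, r = kappaV (Fin m) v θ} = α * Real.log m * (1 - θ) := by
    intro θ h1 h2
    have h := hgeom θ ⟨h1.le, h2⟩
    simp only [kappa, Fintype.card_fin] at h
    exact h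
  have habs : ∀ v ∈ MW Ws, ∀ θ : ℝ, θ ≠ 0 →
      kappaV (Fin m) v θ = θ * Real.log ((m:ℝ)⁻¹ * ∑ j, (1 + v j) ^ (1/θ)) := by
    intro v hv θ hθ
    have hsum_eq : ∑ j, |1 + v j| ^ ((1/θ):ℝ) = ∑ j, (1 + v j) ^ ((1/θ):ℝ) :=
      Finset.sum_congr rfl fun j _ => by rw [abs_of_nonneg (hp v hv j)]
    rw [kappaV, if_neg hθ, Fintype.card_fin, hsum_eq]
  have hbdd : ∀ θ : ℝ, 0 < θ →
      BddAbove {r | ∃ v ∈ MW Ws, r = kappaV (Fin m) v θ} := by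
    intro θ hθ
    refine ⟨Real.log m, ?_⟩
    rintro r ⟨v, hv, rfl⟩
    rw [habs v hv θ (ne_of_gt hθ)]
    have hle1 : ∑ j, (1 + v j) ^ ((1/θ):ℝ) ≤ (m:ℝ) * (m:ℝ) ^ ((1/θ):ℝ) := by
      calc ∑ j, (1 + v j) ^ ((1/θ):ℝ) ≤ ∑ _j : Fin m, (m:ℝ) ^ ((1/θ):ℝ) :=
            Finset.sum_le_sum fun j _ =>
              Real.rpow_le_rpow (hp v hv j) (hub v hv j) (by positivity)
      _ = (m:ℝ) * (m:ℝ) ^ ((1/θ):ℝ) := by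
            rw [Finset.sum_const, Finset.card_univ, Fintype.card_fin, nsmul_eq_mul]
    have hpos : 0 < (m:ℝ)⁻¹ * ∑ j, (1 + v j) ^ ((1/θ):ℝ) :=
      mul_pos (inv_pos.2 hm0) (lt_of_lt_of_le one_pos (hT1 v hv (1/θ) (by positivity)))
    have hlog : Real.log ((m:ℝ)⁻¹ * ∑ j, (1 + v j) ^ ((1/θ):ℝ)) ≤ (1/θ) * Real.log m := by
      have hmm : (m:ℝ)⁻¹ * ((m:ℝ) * (m:ℝ) ^ ((1/θ):ℝ)) = (m:ℝ) ^ ((1/θ):ℝ) := by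
        field_simp
      have h2 : (m:ℝ)⁻¹ * ∑ j, (1 + v j) ^ ((1/θ):ℝ) ≤ (m:ℝ) ^ ((1/θ):ℝ) := by
        rw [← hmm]
        exact mul_le_mul_of_nonneg_left hle1 (inv_nonneg.2 hm0.le)
      calc Real.log ((m:ℝ)⁻¹ * ∑ j, (1 + v j) ^ ((1/θ):ℝ))
          ≤ Real.log ((m:ℝ) ^ ((1/θ):ℝ)) := Real.log_le_log hpos h2
      _ = (1/θ) * Real.log m := Real.log_rpow hm0 _
    calc θ * Real.log ((m:ℝ)⁻¹ * ∑ j, (1 + v j) ^ (1/θ))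
        ≤ θ * ((1/θ) * Real.log m) := mul_le_mul_of_nonneg_left hlog hθ.le
    _ = Real.log m := by field_simp
  have hvle : ∀ v ∈ MW Ws, ∀ θ : ℝ, 0 < θ → θ ≤ 1 →
      kappaV (Fin m) v θ ≤ α * Real.log m * (1 - θ) := by
    intro v hv θ h1 h2
    rw [← hκ θ h1 h2]
    exact le_csSup (hbdd θ h1) ⟨v, hv, rfl⟩
  -- the key upper bound on power sums
  have key : ∀ v ∈ MW Ws, ∀ s : ℝ, 1 ≤ s →
      ∑ j, (1 + v j) ^ (s:ℝ) ≤ (m:ℝ) * Real.exp (α * Real.log m * (s - 1)) := by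
    intro v hv s hs
    have hs0 : (0:ℝ) < s := lt_of_lt_of_le one_pos hs
    have h := hvle v hv s⁻¹ (inv_pos.2 hs0) (inv_le_one_of_one_le₀ hs)
    rw [habs v hv s⁻¹ (by positivity), one_div, inv_inv] at h
    have hpos : 0 < (m:ℝ)⁻¹ * ∑ j, (1 + v j) ^ (s:ℝ) :=
      mul_pos (inv_pos.2 hm0) (lt_of_lt_of_le one_pos (hT1 v hv s hs0.le))
    have h2 : Real.log ((m:ℝ)⁻¹ * ∑ j, (1 + v j) ^ (s:ℝ)) ≤ α * Real.log m * (s - 1) := by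
      have h3 := mul_le_mul_of_nonneg_left h hs0.le
      have h4 : s * (s⁻¹ * Real.log ((m:ℝ)⁻¹ * ∑ j, (1 + v j) ^ (s:ℝ)))
          = Real.log ((m:ℝ)⁻¹ * ∑ j, (1 + v j) ^ (s:ℝ)) := by
        field_simp
      have h5 : s * (α * Real.log m * (1 - s⁻¹)) = α * Real.log m * (s - 1) := by
        field_simp
        try ring
      rw [h4, h5] at h3
      exact h3
    have h6 : (m:ℝ)⁻¹ * ∑ j, (1 + v j) ^ (s:ℝ) ≤ Real.exp (α * Real.log m * (s-1)) := by
      rw [← Real.exp_log hpos]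
      exact Real.exp_le_exp.2 h2
    calc ∑ j, (1 + v j) ^ (s:ℝ) = (m:ℝ) * ((m:ℝ)⁻¹ * ∑ j, (1 + v j) ^ (s:ℝ)) := by
          field_simp
    _ ≤ (m:ℝ) * Real.exp (α * Real.log m * (s-1)) := mul_le_mul_of_nonneg_left h6 hm0.le
  -- Part 1
  have part1 : ∀ v ∈ MW Ws,
      (m:ℝ)⁻¹ * ∑ j, (1 + v j) * Real.log (1 + v j) ≤ α * Real.log m := by
    intro v hv
    apply le_of_small
    intro δ hδ hδ1
    have hkey := key v hv (1+δ) (by linarith)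
    rw [show (1+δ-1:ℝ) = δ by ring] at hkey
    have hsum : (m:ℝ) + δ * (∑ j, (1 + v j) * Real.log (1 + v j))
        ≤ (m:ℝ) * Real.exp (α * Real.log m * δ) := by
      calc (m:ℝ) + δ * (∑ j, (1 + v j) * Real.log (1 + v j))
          = ∑ j, ((1 + v j) + δ * ((1 + v j) * Real.log (1 + v j))) := by
            rw [Finset.sum_add_distrib, ← Finset.mul_sum, hsumP v hv]
      _ ≤ ∑ j, (1 + v j) ^ (1+δ:ℝ) :=
            Finset.sum_le_sum fun j _ => ptwise (hp v hv j) hδ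
      _ ≤ (m:ℝ) * Real.exp (α * Real.log m * δ) := hkey
    have hms : (m:ℝ) * ((m:ℝ)⁻¹ * ∑ j, (1 + v j) * Real.log (1 + v j))
        = ∑ j, (1 + v j) * Real.log (1 + v j) := by
      field_simp
    have h1 : 1 + δ * ((m:ℝ)⁻¹ * ∑ j, (1 + v j) * Real.log (1 + v j))
        ≤ Real.exp (α * Real.log m * δ) := by
      have h1a : (m:ℝ) * (1 + δ * ((m:ℝ)⁻¹ * ∑ j, (1 + v j) * Real.log (1 + v j)))
          ≤ (m:ℝ) * Real.exp (α * Real.log m * δ) := by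
        calc (m:ℝ) * (1 + δ * ((m:ℝ)⁻¹ * ∑ j, (1 + v j) * Real.log (1 + v j)))
            = (m:ℝ) + δ * ((m:ℝ) * ((m:ℝ)⁻¹ * ∑ j, (1 + v j) * Real.log (1 + v j))) := by
              ring
        _ = (m:ℝ) + δ * (∑ j, (1 + v j) * Real.log (1 + v j)) := by rw [hms]
        _ ≤ _ := hsum
      exact (mul_le_mul_iff_right₀ hm0).mp h1a
    have h2 : Real.exp (α * Real.log m * δ) * (1 - δ * (α * Real.log m)) ≤ 1 := by
      have ha := Real.add_one_le_exp (-(α * Real.log m * δ))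
      have hb : Real.exp (α * Real.log m * δ) * Real.exp (-(α * Real.log m * δ)) = 1 := by
        rw [hexp]; simp
      nlinarith [Real.exp_pos (α * Real.log m * δ)]
    have h3 : (1 + δ * ((m:ℝ)⁻¹ * ∑ j, (1 + v j) * Real.log (1 + v j)))
        * (1 - δ * (α * Real.log m)) ≤ 1 := by
      have hpos1 : (0:ℝ) < 1 - δ * (α * Real.log m) := by linarith
      calc (1 + δ * ((m:ℝ)⁻¹ * ∑ j, (1 + v j) * Real.log (1 + v j)))
          * (1 - δ * (α * Real.log m))
          ≤ Real.exp (α * Real.log m * δ) * (1 - δ * (α * Real.log m)) :=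
            mul_le_mul_of_nonneg_right h1 hpos1.le
      _ ≤ 1 := h2
    have h4 : δ * (((m:ℝ)⁻¹ * ∑ j, (1 + v j) * Real.log (1 + v j) - α * Real.log m)
        - δ * (((m:ℝ)⁻¹ * ∑ j, (1 + v j) * Real.log (1 + v j)) * (α * Real.log m)))
        ≤ δ * 0 := by nlinarith [h3]
    have h5 := le_of_mul_le_mul_left h4 hδ
    linarith
  -- Part 2 : a nonzero vector in E
  have ha0 : ∃ a : EuclideanSpace ℝ (Fin ℓ), a ≠ 0 := by
    refine ⟨EuclideanSpace.single ⟨0, by omega⟩ (1:ℝ), fun h => ?_⟩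
    have h2 := congrArg (fun x : EuclideanSpace ℝ (Fin ℓ) => x (⟨0, by omega⟩ : Fin ℓ)) h
    rw [EuclideanSpace.single_apply] at h2
    simp at h2
  have h0MW : (0 : Fin m → ℝ) ∈ MW Ws := by
    obtain ⟨a, ha⟩ := ha0
    refine ⟨by simp, fun j => by norm_num, a, ha, ?_⟩
    have h0 : (fun _j : Fin m => (0:ℝ) • a) = (0 : Fin m → EuclideanSpace ℝ (Fin ℓ)) := by
      funext j; simp
    show (fun j : Fin m => (0 : Fin m → ℝ) j • a) ∈ Ws
    have h1 : (fun j : Fin m => (0 : Fin m → ℝ) j • a)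
        = (0 : Fin m → EuclideanSpace ℝ (Fin ℓ)) := by
      funext j
      show (0:ℝ) • a = 0
      simp
    rw [h1]
    exact W.zero_mem
  have hne : (MW Ws).Nonempty := ⟨0, h0MW⟩
  -- compactness of MW
  have hWclosed : IsClosed Ws := Submodule.closed_of_finiteDimensional W
  have hclosed : IsClosed (MW Ws) := by
    apply IsSeqClosed.isClosed
    intro vs v hmem hlim
    have hcoord : ∀ j, Filter.Tendsto (fun n => vs n j) Filter.atTop (nhds (v j)) :=
      fun j => tendsto_pi_nhds.1 hlim j
    refine ⟨?_, ?_, ?_⟩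
    · have h1 : Filter.Tendsto (fun n => ∑ j, vs n j) Filter.atTop (nhds (∑ j, v j)) :=
        tendsto_finset_sum _ (fun j _ => hcoord j)
      have h2 : (fun n => ∑ j, vs n j) = fun _n => (0:ℝ) := funext fun n => (hmem n).1
      rw [h2] at h1
      exact tendsto_nhds_unique h1 tendsto_const_nhds
    · intro j
      exact ge_of_tendsto (hcoord j) (Filter.Eventually.of_forall fun n => (hmem n).2.1 j)
    · choose a ha0' haW using fun n => (hmem n).2.2
      set u : ℕ → EuclideanSpace ℝ (Fin ℓ) := fun n => ‖a n‖⁻¹ • a n with hudef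
      have hu1 : ∀ n, u n ∈ Metric.sphere (0:EuclideanSpace ℝ (Fin ℓ)) 1 := by
        intro n
        rw [mem_sphere_zero_iff_norm, hudef, norm_smul, norm_inv, norm_norm]
        exact inv_mul_cancel₀ (norm_ne_zero_iff.2 (ha0' n))
      have huW : ∀ n, (fun j => vs n j • u n) ∈ Ws := by
        intro n
        have heq : (fun j => vs n j • u n) = ‖a n‖⁻¹ • (fun j => vs n j • a n) := by
          funext j
          simp [hudef, smul_smul, mul_comm]
        rw [heq]
        exact W.smul_mem _ (haW n)
      obtain ⟨b, hbS, φ, hφ, hconv⟩ :=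
        (isCompact_sphere (0:EuclideanSpace ℝ (Fin ℓ)) 1).tendsto_subseq hu1
      refine ⟨b, ?_, ?_⟩
      · have hb1 : ‖b‖ = 1 := mem_sphere_zero_iff_norm.1 hbS
        intro h
        rw [h, norm_zero] at hb1
        norm_num at hb1
      · apply hWclosed.mem_of_tendsto
          (tendsto_pi_nhds.2 fun j => ((hcoord j).comp hφ.tendsto_atTop).smul hconv)
        exact Filter.Eventually.of_forall fun n => huW (φ n)
  have hsub : MW Ws ⊆ Set.pi Set.univ (fun _ : Fin m => Set.Icc (-1:ℝ) (m:ℝ)) := by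
    intro v hv j _
    exact ⟨hv.2.1 j, by linarith [hub v hv j]⟩
  have hcpt : IsCompact (MW Ws) :=
    (isCompact_univ_pi (fun _ => isCompact_Icc)).of_isClosed_subset hclosed hsub
  -- continuity of κ_·(1/2) and attainment
  have hfun : ∀ u : Fin m → ℝ,
      kappaV (Fin m) u (1/2) = (1/2) * Real.log ((m:ℝ)⁻¹ * ∑ j, (1 + u j)^2) := by
    intro u
    rw [kappaV, if_neg (by norm_num : (1/2:ℝ) ≠ 0), Fintype.card_fin]
    have hs : ∑ j, |1 + u j| ^ ((1/(1/2)):ℝ) = ∑ j, (1 + u j)^2 :=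
      Finset.sum_congr rfl fun j _ => by
        rw [show ((1/(1/2)):ℝ) = (2:ℝ) by norm_num, rpow_two', sq_abs]
    rw [hs]
  have hpos2 : ∀ u ∈ MW Ws, 0 < (m:ℝ)⁻¹ * ∑ j, (1 + u j)^2 := by
    intro u hu
    obtain ⟨j0, hj0⟩ := hex u hu
    have h1 : (1:ℝ) ≤ ∑ j, (1 + u j)^2 := by
      calc (1:ℝ) = 1^2 := by norm_num
      _ ≤ (1 + u j0)^2 := by nlinarith
      _ ≤ ∑ j, (1 + u j)^2 :=
          Finset.single_le_sum (f := fun j => (1 + u j)^2) (fun j _ => sq_nonneg _)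
            (Finset.mem_univ j0)
    exact mul_pos (inv_pos.2 hm0) (by linarith)
  have hcont : ContinuousOn (fun u : Fin m → ℝ => kappaV (Fin m) u (1/2)) (MW Ws) := by
    simp only [hfun]
    intro u hu
    have hh : ContinuousAt (fun u : Fin m → ℝ => (m:ℝ)⁻¹ * ∑ j, (1 + u j)^2) u :=
      (continuous_const.mul (continuous_finset_sum _ fun j _ =>
        (continuous_const.add (continuous_apply j)).pow 2)).continuousAt
    have hl := ContinuousAt.comp (x := u)
      (f := fun u : Fin m → ℝ => (m:ℝ)⁻¹ * ∑ j, (1 + u j)^2)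
      (Real.continuousAt_log (ne_of_gt (hpos2 u hu))) hh
    exact (continuousAt_const.mul hl).continuousWithinAt
  obtain ⟨v, hvMW, hvmax⟩ := hcpt.exists_isMaxOn hne hcont
  have hsup : kappaV (Fin m) v (1/2) = α * Real.log m * (1 - 1/2) := by
    refine le_antisymm (hvle v hvMW (1/2) (by norm_num) (by norm_num)) ?_
    rw [← hκ (1/2) (by norm_num) (by norm_num)]
    refine csSup_le ⟨kappaV (Fin m) v (1/2), ⟨v, hvMW, rfl⟩⟩ ?_
    rintro r ⟨w, hw, rfl⟩
    exact hvmax hw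
  -- equality at s = 2
  have hB2 : ∑ j, (1 + v j)^2 = (m:ℝ) * Real.exp (α * Real.log m) := by
    rw [hfun v] at hsup
    have h1 : Real.log ((m:ℝ)⁻¹ * ∑ j, (1 + v j)^2) = α * Real.log m := by linarith
    have h2 : (m:ℝ)⁻¹ * ∑ j, (1 + v j)^2 = Real.exp (α * Real.log m) := by
      rw [← h1, Real.exp_log (hpos2 v hvMW)]
    calc ∑ j, (1 + v j)^2 = (m:ℝ) * ((m:ℝ)⁻¹ * ∑ j, (1 + v j)^2) := by field_simp
    _ = (m:ℝ) * Real.exp (α * Real.log m) := by rw [h2]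
  -- bounds at s = 3/2 and s = 5/2
  have hC_le : ∑ j, (1 + v j) ^ ((3/2:ℝ)) ≤ (m:ℝ) * Real.exp (α * Real.log m * (1/2)) := by
    have h := key v hvMW (3/2) (by norm_num)
    rw [show (3/2-1:ℝ) = 1/2 by norm_num] at h
    exact h
  have hD_le : ∑ j, (1 + v j) ^ ((5/2:ℝ)) ≤ (m:ℝ) * Real.exp (α * Real.log m * (3/2)) := by
    have h := key v hvMW (5/2) (by norm_num)
    rw [show (5/2-1:ℝ) = 3/2 by norm_num] at h
    exact h
  -- Cauchy-Schwarz: (∑ p²)² ≤ (∑ p^{3/2})(∑ p^{5/2})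
  have hCS1 : (∑ j, (1 + v j)^2)^2
      ≤ (∑ j, (1 + v j)^((3/2:ℝ))) * (∑ j, (1 + v j)^((5/2:ℝ))) := by
    have hid := lagrange_identity (fun j => (1 + v j)^((3/4:ℝ))) (fun j => (1 + v j)^((5/4:ℝ)))
    have ha2 : ∀ j : Fin m, ((1 + v j)^((3/4:ℝ)))^2 = (1 + v j)^((3/2:ℝ)) := by
      intro j
      rw [sq, ← Real.rpow_add' (hp v hvMW j) (by norm_num)]
      norm_num
    have hb2 : ∀ j : Fin m, ((1 + v j)^((5/4:ℝ)))^2 = (1 + v j)^((5/2:ℝ)) := by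
      intro j
      rw [sq, ← Real.rpow_add' (hp v hvMW j) (by norm_num)]
      norm_num
    have hab : ∀ j : Fin m, (1 + v j)^((3/4:ℝ)) * (1 + v j)^((5/4:ℝ)) = (1 + v j)^2 := by
      intro j
      rw [← Real.rpow_add' (hp v hvMW j) (by norm_num)]
      norm_num [rpow_two']
    simp only [ha2, hb2, hab] at hid
    have h0 : (0:ℝ) ≤ 2*((∑ j, (1 + v j)^((3/2:ℝ))) * (∑ j, (1 + v j)^((5/2:ℝ))))
        - 2*(∑ j, (1 + v j)^2)^2 := by
      rw [← hid]
      exact Finset.sum_nonneg fun i _ => Finset.sum_nonneg fun j _ => sq_nonneg _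
    linarith
  have hCnn : (0:ℝ) ≤ ∑ j, (1 + v j)^((3/2:ℝ)) :=
    Finset.sum_nonneg fun j _ => Real.rpow_nonneg (hp v hvMW j) _
  have hC_ge : (m:ℝ) * Real.exp (α * Real.log m * (1/2)) ≤ ∑ j, (1 + v j)^((3/2:ℝ)) := by
    have hX : (0:ℝ) < (m:ℝ) * Real.exp (α * Real.log m * (3/2)) :=
      mul_pos hm0 (Real.exp_pos _)
    refine le_of_mul_le_mul_right ?_ hX
    have e1 : ((m:ℝ) * Real.exp (α * Real.log m * (1/2)))
        * ((m:ℝ) * Real.exp (α * Real.log m * (3/2)))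
        = ((m:ℝ) * Real.exp (α * Real.log m))^2 := by
      have h := hexp (α * Real.log m * (1/2)) (α * Real.log m * (3/2))
      have h' := hexp (α * Real.log m) (α * Real.log m)
      rw [show α * Real.log m * (1/2) + α * Real.log m * (3/2)
          = α * Real.log m + α * Real.log m by ring] at h
      rw [← h'] at h
      linear_combination (m:ℝ)^2 * h
    calc ((m:ℝ) * Real.exp (α * Real.log m * (1/2)))
        * ((m:ℝ) * Real.exp (α * Real.log m * (3/2)))
        = ((m:ℝ) * Real.exp (α * Real.log m))^2 := e1
    _ = (∑ j, (1 + v j)^2)^2 := by rw [hB2]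
    _ ≤ (∑ j, (1 + v j)^((3/2:ℝ))) * (∑ j, (1 + v j)^((5/2:ℝ))) := hCS1
    _ ≤ (∑ j, (1 + v j)^((3/2:ℝ))) * ((m:ℝ) * Real.exp (α * Real.log m * (3/2))) :=
        mul_le_mul_of_nonneg_left hD_le hCnn
  have hCeq : ∑ j, (1 + v j)^((3/2:ℝ)) = (m:ℝ) * Real.exp (α * Real.log m * (1/2)) :=
    le_antisymm hC_le hC_ge
  -- equality in Cauchy-Schwarz  ⇒  all positive values equal
  have hzero : ∀ i j : Fin m,
      (1 + v i)^((1/2:ℝ)) * (1 + v j) = (1 + v j)^((1/2:ℝ)) * (1 + v i) := by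
    have hid := lagrange_identity (fun j => (1 + v j)^((1/2:ℝ))) (fun j => (1 + v j))
    have ha2 : ∀ j : Fin m, ((1 + v j)^((1/2:ℝ)))^2 = (1 + v j) := by
      intro j
      rw [sq, ← Real.rpow_add' (hp v hvMW j) (by norm_num)]
      norm_num
    have hab : ∀ j : Fin m, (1 + v j)^((1/2:ℝ)) * (1 + v j) = (1 + v j)^((3/2:ℝ)) := by
      intro j
      rw [show ((3/2:ℝ)) = 1/2 + 1 by norm_num, Real.rpow_add' (hp v hvMW j) (by norm_num),
        Real.rpow_one]
    simp only [ha2, hab] at hid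
    have hRHS : 2*((∑ j, (1 + v j)) * (∑ j, (1 + v j)^2))
        - 2*(∑ j, (1 + v j)^((3/2:ℝ)))^2 = 0 := by
      rw [hsumP v hvMW, hB2, hCeq]
      have h2 : Real.exp (α * Real.log m * (1/2)) * Real.exp (α * Real.log m * (1/2))
          = Real.exp (α * Real.log m) := by
        rw [hexp]
        congr 1
        ring
      linear_combination (-2*(m:ℝ)^2) * h2
    intro i j
    have hLHS0 : ∑ i, ∑ j, ((1 + v i)^((1/2:ℝ)) * (1 + v j)
        - (1 + v j)^((1/2:ℝ)) * (1 + v i))^2 = 0 := by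
      rw [hid]
      linarith [hRHS]
    have h1 := (Finset.sum_eq_zero_iff_of_nonneg
      (fun i _ => Finset.sum_nonneg fun j _ => sq_nonneg _)).mp hLHS0 i (Finset.mem_univ i)
    have h2 := (Finset.sum_eq_zero_iff_of_nonneg
      (fun j _ => sq_nonneg _)).mp h1 j (Finset.mem_univ j)
    have h3 := sq_eq_zero_iff.mp h2
    linarith [sub_eq_zero.mp h3]
  have hsame : ∀ i j : Fin m, 0 < 1 + v i → 0 < 1 + v j → 1 + v i = 1 + v j := by
    intro i j hi hj
    have h := hzero i j
    have hx2 : ((1 + v i)^((1/2:ℝ)))^2 = 1 + v i := by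
      rw [sq, ← Real.rpow_add' (hp v hvMW i) (by norm_num)]
      norm_num
    have hy2 : ((1 + v j)^((1/2:ℝ)))^2 = 1 + v j := by
      rw [sq, ← Real.rpow_add' (hp v hvMW j) (by norm_num)]
      norm_num
    set x := (1 + v i)^((1/2:ℝ)) with hxdef
    set y := (1 + v j)^((1/2:ℝ)) with hydef
    have hxp : 0 < x := Real.rpow_pos_of_pos hi _
    have hyp : 0 < y := Real.rpow_pos_of_pos hj _
    rw [← hx2, ← hy2] at h
    have hfac : (x*y) * (y - x) = 0 := by linear_combination h
    rcases mul_eq_zero.mp hfac with h' | h'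
    · exact absurd h' (by positivity)
    · have hyx : y = x := by linarith
      rw [← hx2, ← hy2, hyx]
  -- structure of the extremal v
  obtain ⟨j0, hj0⟩ := hex v hvMW
  have hq0 : (0:ℝ) < 1 + v j0 := by linarith
  set H : Finset (Fin m) := Finset.univ.filter (fun j => 0 < 1 + v j) with hHdef
  have hj0H : j0 ∈ H := by
    rw [hHdef]
    exact Finset.mem_filter.2 ⟨Finset.mem_univ _, hq0⟩
  have hqH : ∀ j ∈ H, 1 + v j = 1 + v j0 := by
    intro j hj
    rw [hHdef] at hj
    exact hsame j j0 (Finset.mem_filter.1 hj).2 hq0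
  have hoff : ∀ j ∉ H, 1 + v j = 0 := by
    intro j hj
    rw [hHdef] at hj
    have h1 : ¬ (0 < 1 + v j) := fun h => hj (Finset.mem_filter.2 ⟨Finset.mem_univ _, h⟩)
    linarith [hp v hvMW j, not_lt.mp h1]
  have hsplit : ∀ f : Fin m → ℝ, (∀ j ∉ H, f j = 0) → ∑ j, f j = ∑ j ∈ H, f j :=
    fun f hf => (Finset.sum_subset (Finset.subset_univ H) (fun j _ hj => hf j hj)).symm
  have hNq : (H.card : ℝ) * (1 + v j0) = (m:ℝ) := by
    calc (H.card : ℝ) * (1 + v j0) = ∑ _j ∈ H, (1 + v j0) := by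
          rw [Finset.sum_const, nsmul_eq_mul]
    _ = ∑ j ∈ H, (1 + v j) := (Finset.sum_congr rfl hqH).symm
    _ = ∑ j, (1 + v j) := (hsplit _ hoff).symm
    _ = (m:ℝ) := hsumP v hvMW
  have hNq2 : (H.card : ℝ) * (1 + v j0)^2 = (m:ℝ) * Real.exp (α * Real.log m) := by
    calc (H.card : ℝ) * (1 + v j0)^2 = ∑ _j ∈ H, (1 + v j0)^2 := by
          rw [Finset.sum_const, nsmul_eq_mul]
    _ = ∑ j ∈ H, (1 + v j)^2 := (Finset.sum_congr rfl fun j hj => by rw [hqH j hj]).symm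
    _ = ∑ j, (1 + v j)^2 := (hsplit _ (fun j hj => by rw [hoff j hj]; ring)).symm
    _ = (m:ℝ) * Real.exp (α * Real.log m) := hB2
  have hq : 1 + v j0 = Real.exp (α * Real.log m) := by
    have h1 : (m:ℝ) * (1 + v j0) = (m:ℝ) * Real.exp (α * Real.log m) := by
      calc (m:ℝ) * (1 + v j0) = ((H.card : ℝ) * (1 + v j0)) * (1 + v j0) := by rw [hNq]
      _ = (H.card : ℝ) * (1 + v j0)^2 := by ring
      _ = (m:ℝ) * Real.exp (α * Real.log m) := hNq2
    exact mul_left_cancel₀ hm0' h1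
  have hqrpow : 1 + v j0 = (m:ℝ) ^ (α:ℝ) := by
    rw [hq, Real.rpow_def_of_pos hm0, mul_comm]
  have hNval : (H.card : ℝ) = (m:ℝ) ^ ((1:ℝ) - α) := by
    have h1 : (m:ℝ) ^ ((1:ℝ) - α) * (m:ℝ) ^ (α:ℝ) = (m:ℝ) := by
      rw [← Real.rpow_add hm0]
      norm_num
    have h2 : (H.card : ℝ) * (m:ℝ) ^ (α:ℝ) = (m:ℝ) := by
      rw [← hqrpow]
      exact hNq
    have h3 : (m:ℝ) ^ (α:ℝ) ≠ 0 := (Real.rpow_pos_of_pos hm0 α).ne'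
    exact mul_right_cancel₀ h3 (h2.trans h1.symm)
  have hNpos : 0 < H.card := Finset.card_pos.2 ⟨j0, hj0H⟩
  refine ⟨part1, H.card, hNpos, hNval, v, hvMW, H, rfl, ?_, ?_, ?_⟩
  · intro j hj
    have h := hqH j hj
    rw [hqrpow] at h
    linarith
  · intro j hj
    have h := hoff j hj
    linarith
  · have hlogq : Real.log (1 + v j0) = α * Real.log m := by
      rw [hq, Real.log_exp]
    have h1 : ∑ j, (1 + v j) * Real.log (1 + v j)
        = ∑ j ∈ H, (1 + v j) * Real.log (1 + v j) :=
      hsplit _ (fun j hj => by rw [hoff j hj]; simp)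
    have h2 : ∑ j ∈ H, (1 + v j) * Real.log (1 + v j)
        = ∑ _j ∈ H, (1 + v j0) * (α * Real.log m) :=
      Finset.sum_congr rfl fun j hj => by rw [hqH j hj, hlogq]
    rw [h1, h2, Finset.sum_const, nsmul_eq_mul]
    have h3 : (H.card : ℝ) * ((1 + v j0) * (α * Real.log m))
        = (m:ℝ) * (α * Real.log m) := by
      rw [← hNq]
      ring
    rw [h3]
    field_simp


end TracePaper
end
end

section
/- Let W ⊆ V⊗ℝ^ℓ be a geometric space, let α = −κ′(1)/log m, and let φ: W → V be a linear operator. If the bilinear trace inequality holds for (W, φ, α) — namely, there is C such that ∫_𝕋 |𝕀_α[F]| dν ≤ C·(sup_{n≥0, ω∈𝒜ℱ_n} m^{(1−α)n} ν(ω))·‖F‖_{L¹} for every finite nonnegative Borel measure ν on 𝕋 and every simple martingale F ∈ 𝕎 — then φ is a canceling operator. -/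
open MeasureTheory Finset

noncomputable section

namespace TracePaper

variable {ι : Type} [Fintype ι]
variable {E : Type} [AddCommGroup E] [Module ℝ E]

/-! ### Auxiliary material for the proof of Statement 8 -/

section Aux

open scoped ENNReal

lemma sum_snoc' {X M : Type*} [Fintype X] [AddCommMonoid M] (n : ℕ)
    (G : (Fin (n+1) → X) → M) :
    ∑ c : Fin (n+1) → X, G c = ∑ c : Fin n → X, ∑ j : X, G (Fin.snoc c j) := by
  rw [← Equiv.sum_comp (Fin.snocEquiv (fun _ => X)) G, Fintype.sum_prod_type, Finset.sum_comm]
  rfl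

lemma nat_mul_le_false {x y : ℝ} (hx : 0 < x) (h : ∀ N : ℕ, (N : ℝ) * x ≤ y) : False := by
  obtain ⟨n, hn⟩ := exists_nat_gt (y / x)
  have := (le_div_iff₀ hx).2 (h n)
  linarith

namespace CoreAux

variable {κ : Type*} [Fintype κ] [Nonempty κ]

def SS (t : κ → ℝ) (N : ℕ) (c : Fin N → κ) : ℝ := ∑ n, t (c n)

omit [Nonempty κ] in
lemma SS_snoc (t : κ → ℝ) (N : ℕ) (c : Fin N → κ) (j : κ) :
    SS t (N+1) (Fin.snoc c j) = SS t N c + t j := by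
  unfold SS
  rw [Fin.sum_univ_castSucc]
  simp [Fin.snoc_castSucc, Fin.snoc_last]

def Mom (t : κ → ℝ) (f : ℝ → ℝ) (N : ℕ) : ℝ := ∑ c : Fin N → κ, f (SS t N c)

omit [Nonempty κ] in
lemma Mom_zero (t : κ → ℝ) (f : ℝ → ℝ) : Mom t f 0 = f 0 := by
  simp [Mom, SS]

omit [Nonempty κ] in
lemma Mom_succ (t : κ → ℝ) (f : ℝ → ℝ) (N : ℕ) :
    Mom t f (N+1) = ∑ c : Fin N → κ, ∑ j : κ, f (SS t N c + t j) := by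
  unfold Mom
  rw [sum_snoc']
  exact Finset.sum_congr rfl fun c _ => Finset.sum_congr rfl fun j _ => by rw [SS_snoc]

lemma hcardfun (κ : Type*) [Fintype κ] (N : ℕ) :
    (Fintype.card (Fin N → κ) : ℝ) = (Fintype.card κ : ℝ) ^ N := by
  rw [Fintype.card_fun]; push_cast [Fintype.card_fin]; ring

/-- core combinatorial lemma -/
lemma core_lemma (t : κ → ℝ) (B : ℝ)
    (hb : ∀ N : ℕ, ∑ c : Fin N → κ, |∑ n : Fin N, t (c n)| ≤ B * (Fintype.card κ : ℝ) ^ N) :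
    ∀ k, t k = 0 := by
  set K : ℝ := (Fintype.card κ : ℝ) with hK
  have hK0 : 0 < K := by
    have := Fintype.card_pos (α := κ); rw [hK]; positivity
  set T : ℝ := ∑ j, t j with hT
  set Q : ℝ := ∑ j, t j ^ 2 with hQ
  set Q3 : ℝ := ∑ j, t j ^ 3 with hQ3
  set Q4 : ℝ := ∑ j, t j ^ 4 with hQ4
  have hQnn : 0 ≤ Q := Finset.sum_nonneg fun j _ => sq_nonneg _
  have hQ4nn : 0 ≤ Q4 := Finset.sum_nonneg fun j _ => by positivity
  -- inner sum expansions
  have inner1 : ∀ x : ℝ, ∑ j : κ, (x + t j) = K * x + T := by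
    intro x
    rw [Finset.sum_add_distrib, Finset.sum_const, Finset.card_univ, nsmul_eq_mul, ← hT, ← hK]
  have inner2 : ∀ x : ℝ, ∑ j : κ, (x + t j) ^ 2 = K * x ^ 2 + 2 * x * T + Q := by
    intro x
    have e : ∀ j : κ, (x + t j) ^ 2 = x ^ 2 + (2 * x) * t j + t j ^ 2 := fun j => by ring
    simp only [e]
    rw [Finset.sum_add_distrib, Finset.sum_add_distrib, Finset.sum_const, ← Finset.mul_sum,
      Finset.card_univ, nsmul_eq_mul, ← hT, ← hQ, ← hK]
  have inner4 : ∀ x : ℝ,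
      ∑ j : κ, (x + t j) ^ 4 = K * x ^ 4 + (4 * x ^ 3) * T + (6 * x ^ 2) * Q + (4 * x) * Q3 + Q4 := by
    intro x
    have e : ∀ j : κ, (x + t j) ^ 4
        = x ^ 4 + (4 * x ^ 3) * t j + (6 * x ^ 2) * t j ^ 2 + (4 * x) * t j ^ 3 + t j ^ 4 :=
      fun j => by ring
    simp only [e]
    rw [Finset.sum_add_distrib, Finset.sum_add_distrib, Finset.sum_add_distrib,
      Finset.sum_add_distrib, Finset.sum_const, ← Finset.mul_sum, ← Finset.mul_sum,
      ← Finset.mul_sum, Finset.card_univ, nsmul_eq_mul, ← hT, ← hQ, ← hQ3, ← hQ4, ← hK]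
  -- moments
  set M1 : ℕ → ℝ := Mom t (fun x => x) with hM1
  set M2 : ℕ → ℝ := Mom t (fun x => x ^ 2) with hM2
  set M3 : ℕ → ℝ := Mom t (fun x => |x| ^ 3) with hM3
  set M4 : ℕ → ℝ := Mom t (fun x => x ^ 4) with hM4
  set L : ℕ → ℝ := Mom t (fun x => |x|) with hL
  have houter : ∀ (N : ℕ) (a b : ℝ) (g : (Fin N → κ) → ℝ),
      ∑ c : Fin N → κ, (a * g c + b) = a * (∑ c : Fin N → κ, g c) + K ^ N * b := by
    intro N a b g
    rw [Finset.sum_add_distrib, ← Finset.mul_sum, Finset.sum_const, Finset.card_univ,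
      nsmul_eq_mul, hcardfun κ N, ← hK]
  -- recursions
  have hrec1 : ∀ N, M1 (N+1) = K * M1 N + K ^ N * T := by
    intro N
    rw [hM1, Mom_succ]
    simp only [inner1]
    exact houter N K T (fun c => SS t N c)
  have houter4 : ∀ (N : ℕ) (a b e d : ℝ) (g1 g2 g3 : (Fin N → κ) → ℝ),
      ∑ c : Fin N → κ, (a * g1 c + b * g2 c + e * g3 c + d)
        = a * (∑ c : Fin N → κ, g1 c) + b * (∑ c : Fin N → κ, g2 c)
          + e * (∑ c : Fin N → κ, g3 c) + K ^ N * d := by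
    intro N a b e d g1 g2 g3
    rw [Finset.sum_add_distrib, Finset.sum_add_distrib, Finset.sum_add_distrib,
      ← Finset.mul_sum, ← Finset.mul_sum, ← Finset.mul_sum, Finset.sum_const, Finset.card_univ,
      nsmul_eq_mul, hcardfun κ N, ← hK]
  set M3s : ℕ → ℝ := Mom t (fun x => x ^ 3) with hM3s
  have hrec2 : ∀ N, M2 (N+1) = K * M2 N + 2 * T * M1 N + K ^ N * Q := by
    intro N
    rw [hM2, Mom_succ]
    simp only [inner2]
    have e : ∀ c : Fin N → κ, K * SS t N c ^ 2 + 2 * SS t N c * T + Q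
        = K * (SS t N c ^ 2) + (2 * T) * SS t N c + 0 * SS t N c + Q := fun c => by ring
    simp only [e]
    rw [houter4 N K (2*T) 0 Q (fun c => SS t N c ^ 2) (fun c => SS t N c) (fun c => SS t N c)]
    simp only [hM2, hM1, Mom]
    ring
  have hrec4 : ∀ N, M4 (N+1)
      = K * M4 N + 4 * T * M3s N + 6 * Q * M2 N + 4 * Q3 * M1 N + K ^ N * Q4 := by
    intro N
    rw [hM4, Mom_succ]
    simp only [inner4]
    have e : ∀ c : Fin N → κ,
        K * SS t N c ^ 4 + 4 * SS t N c ^ 3 * T + 6 * SS t N c ^ 2 * Q + 4 * SS t N c * Q3 + Q4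
        = K * (SS t N c ^ 4) + (4 * T) * (SS t N c ^ 3)
          + (6 * Q) * (SS t N c ^ 2) + ((4 * Q3) * SS t N c + Q4) := fun c => by ring
    simp only [e]
    rw [Finset.sum_add_distrib, Finset.sum_add_distrib, Finset.sum_add_distrib,
      Finset.sum_add_distrib, ← Finset.mul_sum, ← Finset.mul_sum, ← Finset.mul_sum,
      ← Finset.mul_sum, Finset.sum_const, Finset.card_univ, nsmul_eq_mul, hcardfun κ N, ← hK]
    simp only [hM4, hM3s, hM2, hM1, Mom]
    ring
  -- L bound restated
  have hLb : ∀ N, L N ≤ B * K ^ N := by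
    intro N
    have e : L N = ∑ c : Fin N → κ, |∑ n : Fin N, t (c n)| := by
      simp only [hL, Mom, SS]
    rw [e]; exact hb N
  have hLnn : ∀ N, 0 ≤ L N := fun N => Finset.sum_nonneg fun c _ => abs_nonneg _
  have hM2nn : ∀ N, 0 ≤ M2 N := fun N => Finset.sum_nonneg fun c _ => sq_nonneg _
  have hM3nn : ∀ N, 0 ≤ M3 N := fun N => Finset.sum_nonneg fun c _ => by positivity
  -- closed form for M1
  have hm1K : ∀ N : ℕ, K * M1 N = (N : ℝ) * T * K ^ N := by
    intro N
    induction N with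
    | zero => simp [hM1, Mom_zero]
    | succ n ih =>
      rw [hrec1 n]
      push_cast
      linear_combination K * ih
  have habs : ∀ N, |M1 N| ≤ L N := by
    intro N
    simp only [hM1, hL, Mom]
    exact Finset.abs_sum_le_sum_abs _ _
  have hT0 : T = 0 := by
    by_contra hTne
    refine nat_mul_le_false (abs_pos.2 hTne) (y := K * B) fun N => ?_
    have h1 : |K * M1 N| = (N : ℝ) * |T| * K ^ N := by
      rw [hm1K N, abs_mul, abs_mul, Nat.abs_cast, abs_of_nonneg (pow_nonneg hK0.le N)]
    have h2 : |K * M1 N| ≤ K * (B * K ^ N) := by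
      rw [abs_mul, abs_of_nonneg hK0.le]
      exact mul_le_mul_of_nonneg_left ((habs N).trans (hLb N)) hK0.le
    have h3 : (N : ℝ) * |T| * K ^ N ≤ (K * B) * K ^ N := by
      rw [← h1]
      calc |K * M1 N| ≤ K * (B * K ^ N) := h2
        _ = (K * B) * K ^ N := by ring
    exact le_of_mul_le_mul_right h3 (pow_pos hK0 N)
  have hm10 : ∀ N, M1 N = 0 := by
    intro N
    have := hm1K N
    rw [hT0] at this
    have h0 : K * M1 N = 0 := by rw [this]; ring
    exact (mul_eq_zero.1 h0).resolve_left hK0.ne'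
  -- normalized quantities
  set q : ℝ := Q / K with hq
  set q4 : ℝ := Q4 / K with hq4
  set KK : ℝ := 3 * q ^ 2 + q4 with hKK
  have hQq : Q = q * K := (div_mul_cancel₀ Q hK0.ne').symm
  have hQ4q : Q4 = q4 * K := (div_mul_cancel₀ Q4 hK0.ne').symm
  have hqnn : 0 ≤ q := div_nonneg hQnn hK0.le
  have hq4nn : 0 ≤ q4 := div_nonneg hQ4nn hK0.le
  have hKKnn : 0 ≤ KK := by positivity
  have hm2c : ∀ N : ℕ, M2 N = (N : ℝ) * q * K ^ N := by
    intro N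
    induction N with
    | zero => simp [hM2, Mom_zero]
    | succ n ih =>
      rw [hrec2 n, ih, hT0, hQq]
      push_cast
      ring
  have hm4c : ∀ N : ℕ, M4 N ≤ (N : ℝ) ^ 2 * KK * K ^ N := by
    intro N
    induction N with
    | zero => simp [hM4, Mom_zero]
    | succ n ih =>
      rw [hrec4 n, hT0, hm10 n, hm2c n, hQq, hQ4q, hKK]
      rw [hKK] at ih
      push_cast
      rw [pow_succ K n]
      have hKn : (0:ℝ) < K ^ n := pow_pos hK0 n
      have h1 : K * M4 n ≤ K * ((n:ℝ) ^ 2 * (3 * q ^ 2 + q4) * K ^ n) :=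
        mul_le_mul_of_nonneg_left ih hK0.le
      have hnn : (0:ℝ) ≤ (n:ℝ) := Nat.cast_nonneg n
      have hKKn : (0:ℝ) < K * K ^ n := mul_pos hK0 hKn
      nlinarith [mul_nonneg (mul_nonneg hKKn.le hq4nn) hnn,
        mul_nonneg (mul_nonneg hKKn.le (sq_nonneg q)) hnn,
        mul_nonneg hKKn.le hq4nn, mul_nonneg hKKn.le (sq_nonneg q)]
  -- Cauchy-Schwarz inequalities
  have hcs1 : ∀ N, M2 N ^ 2 ≤ L N * M3 N := by
    intro N
    have key := Finset.sum_mul_sq_le_sq_mul_sq (univ : Finset (Fin N → κ))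
      (fun c => Real.sqrt |SS t N c|) (fun c => Real.sqrt (|SS t N c| ^ 3))
    have e1 : ∀ c : Fin N → κ,
        Real.sqrt |SS t N c| * Real.sqrt (|SS t N c| ^ 3) = SS t N c ^ 2 := by
      intro c
      rw [← Real.sqrt_mul (abs_nonneg _)]
      rw [show |SS t N c| * |SS t N c| ^ 3 = (|SS t N c| ^ 2) ^ 2 from by ring, sq_abs]
      exact Real.sqrt_sq (sq_nonneg _)
    have e2 : ∀ c : Fin N → κ, Real.sqrt |SS t N c| ^ 2 = |SS t N c| :=
      fun c => Real.sq_sqrt (abs_nonneg _)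
    have e3 : ∀ c : Fin N → κ, Real.sqrt (|SS t N c| ^ 3) ^ 2 = |SS t N c| ^ 3 :=
      fun c => Real.sq_sqrt (by positivity)
    simp only [e1, e2, e3] at key
    simp only [hM2, hL, hM3, Mom]
    exact key
  have hcs2 : ∀ N, M3 N ^ 2 ≤ M2 N * M4 N := by
    intro N
    have key := Finset.sum_mul_sq_le_sq_mul_sq (univ : Finset (Fin N → κ))
      (fun c => |SS t N c|) (fun c => SS t N c ^ 2)
    have e1 : ∀ c : Fin N → κ, |SS t N c| * SS t N c ^ 2 = |SS t N c| ^ 3 := by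
      intro c
      rw [← sq_abs]
      ring
    have e2 : ∀ c : Fin N → κ, |SS t N c| ^ 2 = SS t N c ^ 2 := fun c => sq_abs _
    have e3 : ∀ c : Fin N → κ, (SS t N c ^ 2) ^ 2 = SS t N c ^ 4 := fun c => by ring
    simp only [e1, e2, e3] at key
    simp only [hM3, hM2, hM4, Mom]
    exact key
  -- conclude Q = 0
  have hQ0 : Q = 0 := by
    by_contra hQne
    have hQpos : 0 < Q := lt_of_le_of_ne hQnn (Ne.symm hQne)
    have hqpos : 0 < q := div_pos hQpos hK0
    refine nat_mul_le_false (x := q ^ 3) (by positivity) (y := B ^ 2 * KK) fun N => ?_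
    rcases Nat.eq_zero_or_pos N with h0 | hNpos
    · rw [h0]
      push_cast
      have : (0:ℝ) ≤ B ^ 2 * KK := mul_nonneg (sq_nonneg B) hKKnn
      linarith
    · have hNR : (0:ℝ) < (N : ℝ) := by exact_mod_cast hNpos
      have hKN : (0:ℝ) < K ^ N := pow_pos hK0 N
      have c3 : M2 N ^ 2 ≤ B * K ^ N * M3 N :=
        (hcs1 N).trans (by
          have := mul_le_mul_of_nonneg_right (hLb N) (hM3nn N)
          linarith)
      have c4 : (M2 N ^ 2) ^ 2 ≤ (B * K ^ N * M3 N) ^ 2 :=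
        pow_le_pow_left₀ (sq_nonneg _) c3 2
      have c6 : (B * K ^ N * M3 N) ^ 2 = B ^ 2 * (K ^ N) ^ 2 * M3 N ^ 2 := by ring
      have c7 : (M2 N ^ 2) ^ 2 ≤ B ^ 2 * (K ^ N) ^ 2 * (M2 N * M4 N) := by
        calc (M2 N ^ 2) ^ 2 ≤ B ^ 2 * (K ^ N) ^ 2 * M3 N ^ 2 := by rw [← c6]; exact c4
          _ ≤ B ^ 2 * (K ^ N) ^ 2 * (M2 N * M4 N) :=
            mul_le_mul_of_nonneg_left (hcs2 N) (by positivity)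
      have c8 : M2 N * M4 N ≤ ((N:ℝ) * q * K ^ N) * ((N:ℝ) ^ 2 * KK * K ^ N) := by
        rw [hm2c N]
        refine mul_le_mul_of_nonneg_left (hm4c N) ?_
        positivity
      have c9 : (M2 N ^ 2) ^ 2 ≤ B ^ 2 * (K ^ N) ^ 2 * (((N:ℝ) * q * K ^ N) * ((N:ℝ) ^ 2 * KK * K ^ N)) :=
        c7.trans (mul_le_mul_of_nonneg_left c8 (by positivity))
      have hD : (0:ℝ) < (N:ℝ) ^ 3 * q * (K ^ N) ^ 4 := by positivity
      have e : (N:ℝ) * q ^ 3 * ((N:ℝ) ^ 3 * q * (K ^ N) ^ 4) = (M2 N ^ 2) ^ 2 := by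
        rw [hm2c N]; ring
      have e2 : B ^ 2 * KK * ((N:ℝ) ^ 3 * q * (K ^ N) ^ 4)
          = B ^ 2 * (K ^ N) ^ 2 * (((N:ℝ) * q * K ^ N) * ((N:ℝ) ^ 2 * KK * K ^ N)) := by ring
      have final : (N:ℝ) * q ^ 3 * ((N:ℝ) ^ 3 * q * (K ^ N) ^ 4)
          ≤ B ^ 2 * KK * ((N:ℝ) ^ 3 * q * (K ^ N) ^ 4) := by
        rw [e, e2]; exact c9
      exact le_of_mul_le_mul_right final hD
  intro k
  have hsum0 : ∑ j : κ, t j ^ 2 = 0 := by rw [← hQ]; exact hQ0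
  have hk := (Finset.sum_eq_zero_iff_of_nonneg (fun j _ => sq_nonneg (t j))).1 hsum0 k
    (Finset.mem_univ k)
  exact pow_eq_zero_iff two_ne_zero |>.mp hk

end CoreAux

section HaarAux
variable (h : ℕ) [NeZero h]

local instance : TopologicalSpace (Fin h) := ⊥
local instance : DiscreteTopology (Fin h) := ⟨rfl⟩
local instance : IsTopologicalAddGroup (Fin h) :=
  { continuous_add := continuous_of_discreteTopology
    continuous_neg := continuous_of_discreteTopology }

lemma measurableSet_cyl {ι : Type} (n : ℕ) (c : Fin n → ι) :
    MeasurableSet[treeMS ι] (cyl n c) := by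
  have : cyl n c = ⋂ i : Fin n, (fun γ : ℕ → ι => γ i) ⁻¹' {c i} := by
    ext γ
    simp [cyl, Set.mem_iInter]
  rw [this]
  exact MeasurableSet.iInter fun i =>
    (@measurable_pi_apply ℕ (fun _ => ι) (fun _ => ⊤) i) (by trivial)

lemma exists_haar :
    ∃ μ : Measure (ℕ → Fin h), IsProbabilityMeasure μ ∧
      ∀ (n : ℕ) (d : Fin n → Fin h), μ (cyl n d) = ((h : ℝ≥0∞) ^ n)⁻¹ := by
  have hne : Nonempty (Fin h) := ⟨⟨0, Nat.pos_of_ne_zero (NeZero.ne h)⟩⟩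
  set μ : Measure (ℕ → Fin h) :=
    Measure.addHaarMeasure (⊤ : TopologicalSpace.PositiveCompacts (ℕ → Fin h)) with hμ
  have huniv : μ Set.univ = 1 := by
    have := Measure.addHaarMeasure_self
      (K₀ := (⊤ : TopologicalSpace.PositiveCompacts (ℕ → Fin h)))
    rwa [TopologicalSpace.PositiveCompacts.coe_top] at this
  have hprob : IsProbabilityMeasure μ := ⟨huniv⟩
  refine ⟨μ, hprob, fun n d => ?_⟩
  -- translation invariance: all cylinders at level n have the same measure
  have htrans : ∀ d' : Fin n → Fin h, μ (cyl n d') = μ (cyl n (fun _ => 0)) := by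
    intro d'
    have hext : cyl n d' =
        (fun γ : ℕ → Fin h =>
          (fun i : ℕ => if hi : i < n then -(d' ⟨i, hi⟩) else 0) + γ) ⁻¹' cyl n (fun _ => 0) := by
      ext γ
      simp only [cyl, Set.mem_preimage, Set.mem_setOf_eq, Pi.add_apply]
      constructor
      · intro hg i
        rw [dif_pos i.isLt, hg i]
        simp
      · intro hg i
        have := hg i
        rw [dif_pos i.isLt] at this
        have := neg_add_eq_zero.mp this
        exact this.symm
    rw [hext, measure_preimage_add]
  -- partition
  have hpart : (Set.univ : Set (ℕ → Fin h)) = ⋃ d' : Fin n → Fin h, cyl n d' := by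
    ext γ
    simp only [Set.mem_univ, true_iff, Set.mem_iUnion]
    exact ⟨fun i => γ i, fun i => rfl⟩
  have hdisj : Pairwise (Function.onFun Disjoint (fun d' : Fin n → Fin h => cyl n d')) := by
    intro d1 d2 hne12
    simp only [Function.onFun]
    rw [Set.disjoint_left]
    intro γ h1 h2
    exact hne12 (funext fun i => (h1 i).symm.trans (h2 i))
  have hmeas : ∀ d' : Fin n → Fin h, MeasurableSet (cyl n d') := fun d' =>
    measurableSet_cyl n d'
  have hsum : (Fintype.card (Fin n → Fin h) : ℝ≥0∞) * μ (cyl n (fun _ => 0)) = 1 := by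
    rw [← huniv, hpart, measure_iUnion hdisj hmeas, tsum_fintype]
    rw [Finset.sum_congr rfl (fun d' _ => htrans d')]
    rw [Finset.sum_const, Finset.card_univ, nsmul_eq_mul]
  have hcard : (Fintype.card (Fin n → Fin h) : ℝ≥0∞) = (h : ℝ≥0∞) ^ n := by
    rw [Fintype.card_fun, Fintype.card_fin, Fintype.card_fin]
    push_cast
    rfl
  rw [htrans d]
  rw [hcard] at hsum
  have hc0 : ((h : ℝ≥0∞) ^ n) ≠ 0 := by
    apply pow_ne_zero
    simpa using NeZero.ne h
  have hct : ((h : ℝ≥0∞) ^ n) ≠ ⊤ := by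
    apply ENNReal.pow_ne_top
    exact ENNReal.natCast_ne_top h
  rw [← one_mul (μ (cyl n (fun _ => 0))), ← ENNReal.inv_mul_cancel hc0 hct, mul_assoc, hsum,
    mul_one]

end HaarAux

lemma exists_good_measure (m : ℕ) (H : Finset (Fin m)) (hH : H.card ≠ 0) :
    ∃ ν : @Measure (ℕ → Fin m) (treeMS (Fin m)),
      (@IsFiniteMeasure _ (treeMS (Fin m)) ν) ∧
      ∀ (n : ℕ) (c : Fin n → Fin m),
        ν (cyl n c) = if ∀ i : Fin n, c i ∈ H then ((H.card : ℝ≥0∞) ^ n)⁻¹ else 0 := by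
  haveI : NeZero H.card := ⟨hH⟩
  obtain ⟨μ, hprob, hcylval⟩ := exists_haar H.card
  set e : Fin H.card → Fin m := fun k => (H.equivFin.symm k : Fin m) with he
  have heH : ∀ k, e k ∈ H := fun k => (H.equivFin.symm k).2
  have heinj : Function.Injective e := fun k1 k2 hk =>
    H.equivFin.symm.injective (Subtype.ext hk)
  have hesurj : ∀ (j : Fin m) (hj : j ∈ H), e (H.equivFin ⟨j, hj⟩) = j := by
    intro j hj
    simp [he]
  set f : (ℕ → Fin H.card) → (ℕ → Fin m) := fun γ i => e (γ i) with hf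
  have hfmeas : @Measurable _ _ _ (treeMS (Fin m)) f := by
    apply measurable_pi_lambda
    intro i
    have hcomp : Measurable (e ∘ (fun γ : ℕ → Fin H.card => γ i)) :=
      (measurable_from_top (f := e)).comp (measurable_pi_apply i)
    exact hcomp
  refine ⟨@Measure.map _ _ _ (treeMS (Fin m)) f μ, ?_, ?_⟩
  · constructor
    rw [Measure.map_apply hfmeas MeasurableSet.univ]
    simp [hprob.measure_univ]
  · intro n c
    rw [Measure.map_apply hfmeas (measurableSet_cyl n c)]
    by_cases hc : ∀ i : Fin n, c i ∈ H
    · rw [if_pos hc]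
      have hpre : f ⁻¹' cyl n c = cyl n (fun i => H.equivFin ⟨c i, hc i⟩) := by
        ext γ
        simp only [Set.mem_preimage, cyl, Set.mem_setOf_eq, hf]
        constructor
        · intro hg i
          apply heinj
          rw [hg i, hesurj (c i) (hc i)]
        · intro hg i
          rw [hg i, hesurj (c i) (hc i)]
      rw [hpre, hcylval]
    · rw [if_neg hc]
      push_neg at hc
      obtain ⟨i0, hi0⟩ := hc
      have hpre : f ⁻¹' cyl n c = ∅ := by
        rw [Set.eq_empty_iff_forall_notMem]
        intro γ hg
        exact hi0 (hg i0 ▸ heH (γ i0))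
      rw [hpre, measure_empty]

section MartAux

def rcoef (m N : ℕ) (H : Finset (Fin m)) (mα : ℝ) (i : ℕ) (j : Fin m) : ℝ :=
  if i < N then (if j ∈ H then mα else 0) else 1

def Pcoef (m N : ℕ) (H : Finset (Fin m)) (mα : ℝ) (n : ℕ) (c : Fin n → Fin m) : ℝ :=
  ∏ i : Fin n, rcoef m N H mα i (c i)

lemma rcoef_nonneg {m N : ℕ} {H : Finset (Fin m)} {mα : ℝ} (hmα : 0 ≤ mα) (i : ℕ) (j : Fin m) :
    0 ≤ rcoef m N H mα i j := by
  unfold rcoef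
  split_ifs <;> first | exact hmα | norm_num

lemma rcoef_sum {m N : ℕ} {H : Finset (Fin m)} {mα : ℝ}
    (hhm : (H.card : ℝ) * mα = (m : ℝ)) (i : ℕ) :
    ∑ j : Fin m, rcoef m N H mα i j = (m : ℝ) := by
  unfold rcoef
  by_cases hi : i < N
  · simp only [if_pos hi]
    rw [Finset.sum_ite_mem, Finset.univ_inter, Finset.sum_const, nsmul_eq_mul, hhm]
  · simp only [if_neg hi]
    rw [Finset.sum_const, Finset.card_univ, Fintype.card_fin, nsmul_eq_mul, mul_one]

lemma Pcoef_nonneg {m N : ℕ} {H : Finset (Fin m)} {mα : ℝ} (hmα : 0 ≤ mα) (n : ℕ)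
    (c : Fin n → Fin m) : 0 ≤ Pcoef m N H mα n c :=
  Finset.prod_nonneg fun i _ => rcoef_nonneg hmα i (c i)

lemma Pcoef_snoc {m : ℕ} (N : ℕ) (H : Finset (Fin m)) (mα : ℝ) (n : ℕ) (c : Fin n → Fin m)
    (j : Fin m) :
    Pcoef m N H mα (n+1) (Fin.snoc c j) = Pcoef m N H mα n c * rcoef m N H mα n j := by
  unfold Pcoef
  rw [Fin.prod_univ_castSucc]
  simp [Fin.snoc_castSucc, Fin.snoc_last, Fin.coe_castSucc, Fin.val_last]

lemma Pcoef_sum {m N : ℕ} {H : Finset (Fin m)} {mα : ℝ}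
    (hhm : (H.card : ℝ) * mα = (m : ℝ)) (n : ℕ) :
    ∑ c : Fin n → Fin m, Pcoef m N H mα n c = (m : ℝ) ^ n := by
  induction n with
  | zero =>
    have h1 : ∀ c : Fin 0 → Fin m, Pcoef m N H mα 0 c = 1 := fun c => by simp [Pcoef]
    rw [Finset.sum_congr rfl fun c _ => h1 c, Finset.sum_const, Finset.card_univ]
    simp
  | succ n ih =>
    rw [sum_snoc' n (fun c => Pcoef m N H mα (n+1) c)]
    rw [Finset.sum_congr rfl fun c _ => Finset.sum_congr rfl fun j _ => Pcoef_snoc N H mα n c j]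
    rw [Finset.sum_congr rfl fun (c : Fin n → Fin m) _ =>
      (Finset.mul_sum Finset.univ (fun j => rcoef m N H mα n j) (Pcoef m N H mα n c)).symm]
    rw [Finset.sum_congr rfl fun (c : Fin n → Fin m) _ => by rw [rcoef_sum hhm n]]
    rw [← Finset.sum_mul, ih, pow_succ]

/-- The basic martingale generated by the extremal vector data. -/
def martF (m ℓ N : ℕ) (H : Finset (Fin m)) (mα : ℝ) (a : EuclideanSpace ℝ (Fin ℓ))
    (hm0 : (0 : ℝ) < (m : ℝ)) (hhm : (H.card : ℝ) * mα = (m : ℝ)) :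
    Mart (Fin m) (EuclideanSpace ℝ (Fin ℓ)) where
  val n c := Pcoef m N H mα n c • a
  avg_eq n c := by
    have h1 : ∑ j : Fin m, Pcoef m N H mα (n+1) (Fin.snoc c j) • a
        = (Pcoef m N H mα n c * (m : ℝ)) • a := by
      rw [← Finset.sum_smul]
      congr 1
      rw [Finset.sum_congr rfl fun j _ => Pcoef_snoc N H mα n c j, ← Finset.mul_sum,
        rcoef_sum hhm n]
    rw [h1, smul_smul, Fintype.card_fin]
    congr 1
    field_simp

end MartAux

end Aux

set_option maxHeartbeats 1000000

/-- if `W` is geometric, `α = -κ'(1)/log m`, and the bilinear trace inequality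
holds at the endpoint, then `φ` is a canceling operator. -/
theorem statement8 (m ℓ : ℕ) (hm : 2 ≤ m) (hℓ : 1 ≤ ℓ)
    (W : Submodule ℝ (Fin m → EuclideanSpace ℝ (Fin ℓ)))
    (hWV : ∀ w ∈ W, ∑ j, w j = 0)
    (φ : (Fin m → EuclideanSpace ℝ (Fin ℓ)) →ₗ[ℝ] (Fin m → ℝ))
    (hφV : ∀ w ∈ W, ∑ j, φ w j = 0)
    (α : ℝ) (hα : α ∈ Set.Ioo (0 : ℝ) 1)
    (hgeom : GeometricOfOrder (W : Set (Fin m → EuclideanSpace ℝ (Fin ℓ))) α)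
    (htrace : TraceIneq (W : Set (Fin m → EuclideanSpace ℝ (Fin ℓ))) (fun w => φ w) α) :
    Canceling (W : Set (Fin m → EuclideanSpace ℝ (Fin ℓ))) α (fun w => φ w) := by
  classical
  intro w H hext j hjH
  obtain ⟨hwW, a, ha0, hcard0, hwH, hwHc⟩ := hext
  have hm0 : (0 : ℝ) < (m : ℝ) := by
    have : 0 < m := by omega
    exact_mod_cast this
  have hcardR : ((H.card : ℝ)) = (m : ℝ) ^ ((1 : ℝ) - α) := by
    simpa [Fintype.card_fin] using hcard0
  have hHcardpos : 0 < H.card := by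
    have h1 : (0 : ℝ) < (H.card : ℝ) := by
      rw [hcardR]; exact Real.rpow_pos_of_pos hm0 _
    exact_mod_cast h1
  set mα : ℝ := (m : ℝ) ^ α with hmαdef
  have hmαpos : 0 < mα := Real.rpow_pos_of_pos hm0 α
  have hhm : (H.card : ℝ) * mα = (m : ℝ) := by
    rw [hcardR, hmαdef, ← Real.rpow_add hm0, sub_add_cancel, Real.rpow_one]
  have hwH' : ∀ k ∈ H, w k = (mα - 1) • a := by
    intro k hk
    simpa [Fintype.card_fin, hmαdef] using hwH k hk
  obtain ⟨ν, hνfin, hνcyl⟩ := exists_good_measure m H hHcardpos.ne'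
  haveI : @IsFiniteMeasure _ (treeMS (Fin m)) ν := hνfin
  obtain ⟨C, hC⟩ := htrace
  -- the enumeration of H
  set e : Fin H.card → Fin m := fun k => (H.equivFin.symm k : Fin m) with he
  have heH : ∀ k, e k ∈ H := fun k => (H.equivFin.symm k).2
  have heinj : Function.Injective e := fun k1 k2 hk =>
    H.equivFin.symm.injective (Subtype.ext hk)
  have hesurj : ∀ (k : Fin m) (hk : k ∈ H), e (H.equivFin ⟨k, hk⟩) = k := by
    intro k hk
    simp [he]
  haveI : Nonempty (Fin H.card) := ⟨⟨0, hHcardpos⟩⟩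
  -- the main bound, for every N, obtained from the trace inequality
  have hbound : ∀ N : ℕ, ∑ c : Fin N → Fin H.card, |∑ n : Fin N, φ w (e (c n))|
      ≤ (C * ‖a‖) * (Fintype.card (Fin H.card) : ℝ) ^ N := by
    intro N
    set F : Mart (Fin m) (EuclideanSpace ℝ (Fin ℓ)) := martF m ℓ N H mα a hm0 hhm with hFdef
    have hval : ∀ (n : ℕ) (c : Fin n → Fin m), F.val n c = Pcoef m N H mα n c • a :=
      fun n c => rfl
    -- the martingale differences
    have hdiffF : ∀ (n : ℕ) (c : Fin n → Fin m),
        diff F n c = if n < N then Pcoef m N H mα n c • w else 0 := by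
      intro n c
      by_cases hn : n < N
      · rw [if_pos hn]
        funext k
        show F.val (n+1) (Fin.snoc c k) - F.val n c = (Pcoef m N H mα n c • w) k
        rw [hval, hval, Pcoef_snoc N H mα n c k, Pi.smul_apply]
        have hr : rcoef m N H mα n k = if k ∈ H then mα else 0 := by
          unfold rcoef; rw [if_pos hn]
        rw [hr]
        by_cases hk : k ∈ H
        · rw [if_pos hk, hwH' k hk, smul_smul, ← sub_smul]
          congr 1
          ring
        · rw [if_neg hk, hwHc k hk, smul_neg, mul_zero, zero_smul, zero_sub]
      · rw [if_neg hn]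
        funext k
        show F.val (n+1) (Fin.snoc c k) - F.val n c = (0 : Fin m → EuclideanSpace ℝ (Fin ℓ)) k
        rw [hval, hval, Pcoef_snoc N H mα n c k]
        have hr : rcoef m N H mα n k = 1 := by
          unfold rcoef; rw [if_neg hn]
        rw [hr, mul_one, Pi.zero_apply, sub_self]
    -- membership and simplicity
    have hmem : MemSpace (W : Set (Fin m → EuclideanSpace ℝ (Fin ℓ))) F := by
      intro n c
      rw [hdiffF n c]
      split_ifs
      · exact SetLike.mem_coe.mpr (Submodule.smul_mem W _ hwW)
      · exact SetLike.mem_coe.mpr (Submodule.zero_mem W)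
    have hsimple : Simple F := ⟨N, fun n hn c => by
      rw [hdiffF n c, if_neg (Nat.not_lt.2 hn)]⟩
    -- L¹ norm
    have hL1 : L1Norm F = ‖a‖ := by
      have hEn : ∀ n : ℕ,
          ((Fintype.card (Fin m) : ℝ) ^ n)⁻¹ * ∑ c : Fin n → Fin m, ‖F.val n c‖ = ‖a‖ := by
        intro n
        have hnrm : ∀ c : Fin n → Fin m, ‖F.val n c‖ = Pcoef m N H mα n c * ‖a‖ := by
          intro c
          rw [hval, norm_smul, Real.norm_eq_abs, abs_of_nonneg (Pcoef_nonneg hmαpos.le n c)]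
        rw [Finset.sum_congr rfl fun c _ => hnrm c, ← Finset.sum_mul, Pcoef_sum hhm n,
          Fintype.card_fin, ← mul_assoc, inv_mul_cancel₀ (by positivity), one_mul]
      unfold L1Norm
      simp only [hEn]
      exact ciSup_const
    -- the value of the transform
    have hIal : ∀ γ : ℕ → Fin m, Ialpha (fun v => φ v) α F γ
        = ∑ n ∈ Finset.range N, (if ∀ i : Fin n, γ i ∈ H then φ w (γ n) else 0) := by
      intro γ
      have hterm : ∀ n : ℕ,
          (Fintype.card (Fin m) : ℝ) ^ (-(α * n)) * φ (diff F n fun i : Fin n => γ i) (γ n)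
          = if n < N then (if ∀ i : Fin n, γ i ∈ H then φ w (γ n) else 0) else 0 := by
        intro n
        rw [hdiffF n _]
        by_cases hn : n < N
        · simp only [if_pos hn]
          rw [LinearMap.map_smul, Pi.smul_apply, smul_eq_mul]
          by_cases hall : ∀ i : Fin n, γ i ∈ H
          · rw [if_pos hall]
            have hP : Pcoef m N H mα n (fun i : Fin n => γ i) = mα ^ n := by
              unfold Pcoef
              have hr : ∀ i : Fin n, rcoef m N H mα i (γ i) = mα := by
                intro i
                unfold rcoef
                rw [if_pos (lt_trans i.isLt hn), if_pos (hall i)]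
              rw [Finset.prod_congr rfl fun i _ => hr i, Finset.prod_const, Finset.card_univ,
                Fintype.card_fin]
            rw [hP]
            have hone : (Fintype.card (Fin m) : ℝ) ^ (-(α * (n : ℝ))) * mα ^ n = 1 := by
              simp only [Fintype.card_fin]
              rw [hmαdef, ← Real.rpow_natCast ((m : ℝ) ^ α) n, ← Real.rpow_mul hm0.le,
                ← Real.rpow_add hm0, neg_add_cancel, Real.rpow_zero]
            rw [← mul_assoc, hone, one_mul]
          · rw [if_neg hall]
            push_neg at hall
            obtain ⟨i0, hi0⟩ := hall
            have hP0 : Pcoef m N H mα n (fun i : Fin n => γ i) = 0 := by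
              apply Finset.prod_eq_zero (Finset.mem_univ i0)
              unfold rcoef
              rw [if_pos (lt_trans i0.isLt hn), if_neg hi0]
            rw [hP0, zero_mul, mul_zero]
        · simp only [if_neg hn]
          rw [LinearMap.map_zero, Pi.zero_apply, mul_zero]
      unfold Ialpha
      calc (∑' n : ℕ, (Fintype.card (Fin m) : ℝ) ^ (-(α * n)) *
              (fun v => φ v) (diff F n fun i : Fin n => γ i) (γ n))
          = ∑' n : ℕ, (if n < N then (if ∀ i : Fin n, γ i ∈ H then φ w (γ n) else 0) else 0) :=
            tsum_congr hterm
        _ = ∑ n ∈ Finset.range N,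
              (if n < N then (if ∀ i : Fin n, γ i ∈ H then φ w (γ n) else 0) else 0) :=
            tsum_eq_sum (fun b hb => if_neg (by simpa using hb))
        _ = ∑ n ∈ Finset.range N, (if ∀ i : Fin n, γ i ∈ H then φ w (γ n) else 0) :=
            Finset.sum_congr rfl fun n hn => if_pos (Finset.mem_range.mp hn)
    -- the transform as a function of the first N digits
    set g : (Fin N → Fin m) → ℝ := fun c =>
      ∑ n : Fin N, (if ∀ i : Fin N, (i : ℕ) < (n : ℕ) → c i ∈ H then φ w (c n) else 0) with hg
    have hIg : ∀ γ : ℕ → Fin m, Ialpha (fun v => φ v) α F γ = g (fun i : Fin N => γ i) := by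
      intro γ
      rw [hIal γ, hg]
      rw [← Fin.sum_univ_eq_sum_range (fun n => if ∀ i : Fin n, γ i ∈ H then φ w (γ n) else 0) N]
      apply Finset.sum_congr rfl
      intro n _
      refine if_congr ⟨fun hc i hi => hc ⟨(i : ℕ), hi⟩, fun hc i => ?_⟩ rfl rfl
      exact hc ⟨(i : ℕ), lt_trans i.isLt n.isLt⟩ i.isLt
    have hptwise : ∀ γ : ℕ → Fin m, |Ialpha (fun v => φ v) α F γ|
        = ∑ c : Fin N → Fin m, Set.indicator (cyl N c) (fun _ => |g c|) γ := by
      intro γ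
      have h0 : ∀ c : Fin N → Fin m, c ∈ Finset.univ → c ≠ (fun i : Fin N => γ i) →
          Set.indicator (cyl N c) (fun _ => |g c|) γ = 0 := by
        intro c _ hne
        apply Set.indicator_of_notMem
        intro hmemc
        exact hne (funext fun i => (hmemc i).symm)
      rw [Finset.sum_eq_single_of_mem (fun i : Fin N => γ i) (Finset.mem_univ _) h0]
      rw [Set.indicator_of_mem (show γ ∈ cyl N (fun i : Fin N => γ i) from fun i => rfl)]
      rw [hIg γ]
    -- computing the integral
    have hint : ∫ γ, |Ialpha (fun v => φ v) α F γ| ∂ν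
        = ∑ c : Fin N → Fin m, (ν (cyl N c)).toReal * |g c| := by
      rw [show (fun γ => |Ialpha (fun v => φ v) α F γ|)
          = fun γ => ∑ c : Fin N → Fin m, Set.indicator (cyl N c) (fun _ => |g c|) γ from
        funext hptwise]
      rw [MeasureTheory.integral_finset_sum _ (fun c _ =>
        (MeasureTheory.integrable_const _).indicator (measurableSet_cyl N c))]
      exact Finset.sum_congr rfl fun c _ => by
        rw [MeasureTheory.integral_indicator_const _ (measurableSet_cyl N c), smul_eq_mul]; rfl
    have hint2 : ∫ γ, |Ialpha (fun v => φ v) α F γ| ∂ν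
        = ((H.card : ℝ) ^ N)⁻¹ * ∑ c' : Fin N → Fin H.card, |∑ n : Fin N, φ w (e (c' n))| := by
      rw [hint]
      have hstep : ∀ c : Fin N → Fin m, (ν (cyl N c)).toReal * |g c|
          = if ∀ i : Fin N, c i ∈ H then ((H.card : ℝ) ^ N)⁻¹ * |g c| else 0 := by
        intro c
        rw [hνcyl N c]
        split_ifs with hc
        · rw [ENNReal.toReal_inv, ENNReal.toReal_pow, ENNReal.toReal_natCast]
        · simp
      rw [Finset.sum_congr rfl fun c _ => hstep c, ← Finset.sum_filter]
      have himg : Finset.univ.filter (fun c : Fin N → Fin m => ∀ i : Fin N, c i ∈ H)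
          = Finset.image (fun c' : Fin N → Fin H.card => fun i => e (c' i)) Finset.univ := by
        ext c
        simp only [Finset.mem_filter, Finset.mem_univ, true_and, Finset.mem_image]
        constructor
        · intro hc
          exact ⟨fun i => H.equivFin ⟨c i, hc i⟩, funext fun i => hesurj (c i) (hc i)⟩
        · rintro ⟨c', rfl⟩ i
          exact heH (c' i)
      rw [himg, Finset.sum_image (fun c1 _ c2 _ hcc => funext fun i => heinj (congrFun hcc i))]
      rw [Finset.mul_sum]
      apply Finset.sum_congr rfl
      intro c' _
      congr 2
      rw [hg]
      apply Finset.sum_congr rfl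
      intro n _
      rw [if_pos (fun i _ => heH (c' i))]
    -- the A-bound
    have hA : ∀ (n : ℕ) (c : Fin n → Fin m),
        (Fintype.card (Fin m) : ℝ) ^ (((1 : ℝ) - α) * n) * (ν (cyl n c)).toReal ≤ 1 := by
      intro n c
      rw [hνcyl n c]
      split_ifs with hc
      · have h1 : (Fintype.card (Fin m) : ℝ) ^ (((1 : ℝ) - α) * n) = (H.card : ℝ) ^ n := by
          simp only [Fintype.card_fin]
          rw [Real.rpow_mul hm0.le, Real.rpow_natCast, ← hcardR]
        have h2 : ((((H.card : ENNReal)) ^ n)⁻¹).toReal = ((H.card : ℝ) ^ n)⁻¹ := by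
          rw [ENNReal.toReal_inv, ENNReal.toReal_pow, ENNReal.toReal_natCast]
        rw [h1, h2, mul_inv_cancel₀ (by positivity)]
      · simp
    -- apply the trace inequality
    have happ := hC ν hνfin F hmem hsimple 1 hA
    rw [hint2, hL1, mul_one] at happ
    have hpowpos : (0 : ℝ) < (H.card : ℝ) ^ N := by positivity
    have hSle : ∑ c' : Fin N → Fin H.card, |∑ n : Fin N, φ w (e (c' n))|
        ≤ (C * ‖a‖) * (H.card : ℝ) ^ N := by
      calc ∑ c' : Fin N → Fin H.card, |∑ n : Fin N, φ w (e (c' n))|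
          = ((H.card : ℝ) ^ N) * (((H.card : ℝ) ^ N)⁻¹ *
              ∑ c' : Fin N → Fin H.card, |∑ n : Fin N, φ w (e (c' n))|) := by
            field_simp
        _ ≤ ((H.card : ℝ) ^ N) * (C * ‖a‖) := mul_le_mul_of_nonneg_left happ hpowpos.le
        _ = (C * ‖a‖) * (H.card : ℝ) ^ N := by ring
    simpa [Fintype.card_fin] using hSle
  -- conclude via the core combinatorial lemma
  have hzero := CoreAux.core_lemma (fun k => φ w (e k)) (C * ‖a‖) hbound
  have hej : e (H.equivFin ⟨j, hjH⟩) = j := hesurj j hjH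
  show φ w j = 0
  rw [← hej]
  exact hzero _

end TracePaper
end
end

section
/- For every μ ≥ 2 and d ≥ 1, the space W_∇ is a geometric space of order 1/d; that is, its function κ satisfies κ(θ) = (1/d)·(log m)·(1−θ) = (log μ)·(1−θ) for all θ ∈ [0,1]. -/
open MeasureTheory Finset

noncomputable section

namespace TracePaper

variable {ι : Type} [Fintype ι]
variable {E : Type} [AddCommGroup E] [Module ℝ E]

section GroupSetting

/-- The group `G = (ℤ/μ)^d`, identified with the branching index set `{1, …, m}`, `m = μ^d`. -/
abbrev Gp (μ d : ℕ) : Type := Fin d → ZMod μ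

/-- The character value `e^{2πi z/μ}` for `z ∈ ℤ/μ`. -/
def ch (μ : ℕ) (z : ZMod μ) : ℂ :=
  Complex.exp (2 * Real.pi * Complex.I * (z.val : ℂ) / (μ : ℂ))

/-- The standard generators `e_j` of `(ℤ/μ)^d`. -/
def egen (μ d : ℕ) (j : Fin d) : Gp μ d := Pi.single j 1

variable (μ d : ℕ) [NeZero μ]

/-- The martingale analogue `W_∇` of the space `BV(ℝ^d)`: discrete gradients of real-valued
functions on `G`. -/
def Wgrad : Set (Gp μ d → EuclideanSpace ℂ (Fin d)) :=
  {g | (∑ x, g x = 0) ∧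
    ∃ f : Gp μ d → ℝ, ∀ (x : Gp μ d) (j : Fin d),
      g x j = (f (x + egen μ d j) : ℂ) - (f x : ℂ)}

/-- The martingale analogue `W_div` of the space of divergence-free measures. -/
def Wdiv : Set (Gp μ d → EuclideanSpace ℂ (Fin d)) :=
  {g | (∑ x, g x = 0) ∧
    ∀ x : Gp μ d, ∑ j, (g (x + egen μ d j) j - g x j) = 0}

/-- The Hermitian inner product `⟨u, v⟩ = ∑_j conj(u_j) v_j` on `ℂ^d`. -/
def hermC (u v : EuclideanSpace ℂ (Fin d)) : ℂ :=
  ∑ j, (starRingEnd ℂ) (u j) * v j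

/-- The translation invariant (convolution) operator `φ[f](x) = ∑_y ⟨K(x-y), f(y)⟩`. -/
def convOp (K : Gp μ d → EuclideanSpace ℂ (Fin d))
    (f : Gp μ d → EuclideanSpace ℂ (Fin d)) (x : Gp μ d) : ℂ :=
  ∑ y, hermC d (K (x - y)) (f y)

end GroupSetting


section Aux

lemma sum_rpow_le_rpow_sum' {β : Type*} (s : Finset β) (t : β → ℝ) (ht : ∀ i ∈ s, 0 ≤ t i)
    {p : ℝ} (hp : 1 ≤ p) : ∑ i ∈ s, t i ^ p ≤ (∑ i ∈ s, t i) ^ p := by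
  have hp0 : 0 < p := lt_of_lt_of_le one_pos hp
  set T := ∑ i ∈ s, t i with hT
  have hT0 : 0 ≤ T := Finset.sum_nonneg ht
  rcases eq_or_lt_of_le hT0 with h0 | hTpos
  · have hz : ∀ i ∈ s, t i = 0 := fun i hi =>
      (Finset.sum_eq_zero_iff_of_nonneg ht).mp h0.symm i hi
    rw [← h0, Real.zero_rpow hp0.ne']
    exact le_of_eq (Finset.sum_eq_zero fun i hi => by
      rw [hz i hi, Real.zero_rpow hp0.ne'])
  · calc ∑ i ∈ s, t i ^ p ≤ ∑ i ∈ s, T ^ (p - 1) * t i := by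
          apply Finset.sum_le_sum
          intro i hi
          rcases eq_or_lt_of_le (ht i hi) with h0 | hpos
          · rw [← h0, Real.zero_rpow hp0.ne', mul_zero]
          · have hle : t i ≤ T := Finset.single_le_sum ht hi
            calc t i ^ p = t i ^ (p - 1) * t i := by
                  rw [← Real.rpow_add_one hpos.ne']; ring_nf
              _ ≤ T ^ (p - 1) * t i :=
                  mul_le_mul_of_nonneg_right
                    (Real.rpow_le_rpow (le_of_lt hpos) hle (by linarith)) (le_of_lt hpos)
      _ = T ^ (p - 1) * T := by rw [← Finset.mul_sum]
      _ = T ^ p := by rw [← Real.rpow_add_one hTpos.ne']; ring_nf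

variable (μ d : ℕ) [NeZero μ]

lemma card_Gp : (Fintype.card (Gp μ d) : ℝ) = (μ : ℝ) ^ d := by
  simp [Gp, ZMod.card]

/-- translation invariance of sums over the group -/
lemma sum_shift (c : Gp μ d) (h : Gp μ d → ℝ) :
    ∑ x : Gp μ d, h (x + c) = ∑ x, h x :=
  Fintype.sum_equiv (Equiv.addRight c) _ _ (fun _ => rfl)

/-- sums of functions of one coordinate -/
lemma fiber_sum (j : Fin d) (h : ZMod μ → ℝ) :
    (μ : ℝ) * ∑ x : Gp μ d, h (x j) = (μ : ℝ) ^ d * ∑ z : ZMod μ, h z := by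
  have key : ∀ k : ZMod μ, ∑ x : Gp μ d, h (x j) = ∑ x : Gp μ d, h (x j + k) := by
    intro k
    have := sum_shift μ d (Pi.single j k) (fun x => h (x j))
    simpa using this.symm
  have h1 : (μ : ℝ) * ∑ x : Gp μ d, h (x j)
      = ∑ k : ZMod μ, ∑ x : Gp μ d, h (x j + k) := by
    rw [Finset.sum_congr rfl (fun k _ => (key k).symm), Finset.sum_const]
    simp [ZMod.card, mul_comm]
  rw [h1, Finset.sum_comm]
  have h2 : ∀ x : Gp μ d, ∑ k : ZMod μ, h (x j + k) = ∑ z : ZMod μ, h z := by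
    intro x
    exact Fintype.sum_equiv (Equiv.addLeft (x j)) _ _ (fun _ => rfl)
  rw [Finset.sum_congr rfl (fun x _ => h2 x), Finset.sum_const]
  simp only [Finset.card_univ, nsmul_eq_mul, card_Gp]

/-- Key structural property: if `v ⊗ a ∈ W_∇` and `a j ≠ 0` then `v` sums to zero
along every coset in direction `j`. -/
lemma coset_sum (v : Gp μ d → ℝ) (a : EuclideanSpace ℂ (Fin d)) (f : Gp μ d → ℝ)
    (hf : ∀ (x : Gp μ d) (j : Fin d),
      (v x • a) j = (f (x + egen μ d j) : ℂ) - (f x : ℂ))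
    (j : Fin d) (hj : a j ≠ 0) (x : Gp μ d) :
    ∑ k : ZMod μ, v (x + Pi.single j k) = 0 := by
  have key : ((∑ k : ZMod μ, v (x + Pi.single j k) : ℝ) : ℂ) * a j = 0 := by
    push_cast
    rw [Finset.sum_mul]
    have step : ∀ k : ZMod μ, (v (x + Pi.single j k) : ℂ) * a j
        = (f (x + Pi.single j (k + 1)) : ℂ) - (f (x + Pi.single j k) : ℂ) := by
      intro k
      have := hf (x + Pi.single j k) j
      have hsmul : (v (x + Pi.single j k) • a) j
          = (v (x + Pi.single j k) : ℂ) * a j := by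
        simp [Complex.real_smul]
      have hg : x + Pi.single j k + egen μ d j = x + Pi.single j (k + 1) := by
        rw [egen, add_assoc, ← Pi.single_add]
      rw [hsmul] at this
      rw [this, hg]
    rw [Finset.sum_congr rfl (fun k _ => step k), Finset.sum_sub_distrib]
    have hbij : ∑ k : ZMod μ, (f (x + Pi.single j (k + 1)) : ℂ)
        = ∑ k : ZMod μ, (f (x + Pi.single j k) : ℂ) :=
      Fintype.sum_equiv (Equiv.addRight (1 : ZMod μ)) _ _ (fun _ => rfl)
    rw [hbij, sub_self]
  rcases mul_eq_zero.mp key with h | h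
  · exact_mod_cast h
  · exact absurd h hj



/-- arithmetic step for `θ ∈ (0,1]` -/
lemma log_step {μR A p θ : ℝ} (hμ2 : 2 ≤ μR) (hθpos : 0 < θ) (hθ1 : θ ≤ 1)
    (hp : p = 1 / θ) (hAnn : 0 ≤ A) (hA : A ≤ μR ^ (p - 1)) :
    θ * Real.log A ≤ Real.log μR * (1 - θ) := by
  have hμpos : (0 : ℝ) < μR := by linarith
  have hlogμ : 0 ≤ Real.log μR := Real.log_nonneg (by linarith)
  have hfin : θ * ((p - 1) * Real.log μR) = Real.log μR * (1 - θ) := by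
    rw [hp]; field_simp
  rcases le_or_gt A 1 with h1 | h1
  · calc θ * Real.log A ≤ 0 :=
        mul_nonpos_of_nonneg_of_nonpos (le_of_lt hθpos) (Real.log_nonpos hAnn h1)
      _ ≤ Real.log μR * (1 - θ) := mul_nonneg hlogμ (by linarith)
  · have hlogA : Real.log A ≤ (p - 1) * Real.log μR := by
      calc Real.log A ≤ Real.log (μR ^ (p - 1)) := Real.log_le_log (by linarith) hA
        _ = (p - 1) * Real.log μR := Real.log_rpow hμpos _
    calc θ * Real.log A ≤ θ * ((p - 1) * Real.log μR) :=
          mul_le_mul_of_nonneg_left hlogA (le_of_lt hθpos)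
      _ = Real.log μR * (1 - θ) := hfin

/-- row bound: `∑ t^p ≤ (∑ t)^p = μ^p` along a coset -/
lemma row_bound (v : Gp μ d → ℝ) (g : ZMod μ → Gp μ d) {p : ℝ} (hp1 : 1 ≤ p)
    (hnn : ∀ y : Gp μ d, 0 ≤ 1 + v y)
    (hone : ∑ k : ZMod μ, (1 + v (g k)) = (μ : ℝ)) :
    ∑ k : ZMod μ, |1 + v (g k)| ^ p ≤ (μ : ℝ) ^ p := by
  have hterm : ∀ k : ZMod μ, |1 + v (g k)| ^ p = (1 + v (g k)) ^ p :=
    fun k => by rw [abs_of_nonneg (hnn _)]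
  rw [Finset.sum_congr rfl (fun k _ => hterm k)]
  calc ∑ k : ZMod μ, (1 + v (g k)) ^ p
      ≤ (∑ k : ZMod μ, (1 + v (g k))) ^ p :=
        sum_rpow_le_rpow_sum' Finset.univ _ (fun k _ => hnn _) hp1
    _ = (μ : ℝ) ^ p := by rw [hone]

/-- averaging over translations in direction `j` -/
lemma main_est_abstract (G : Gp μ d → ℝ) (j : Fin d) (B : ℝ)
    (hrow : ∀ x : Gp μ d, ∑ k : ZMod μ, G (x + Pi.single j k) ≤ B) :
    (μ : ℝ) * ∑ x : Gp μ d, G x ≤ (μ : ℝ) ^ d * B := by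
  have h1 : (μ : ℝ) * ∑ x : Gp μ d, G x
      = ∑ x : Gp μ d, ∑ k : ZMod μ, G (x + Pi.single j k) := by
    rw [Finset.sum_comm]
    have h2 : ∀ k : ZMod μ,
        ∑ x : Gp μ d, G (x + Pi.single j k) = ∑ x : Gp μ d, G x :=
      fun k => sum_shift μ d (Pi.single j k) G
    rw [Finset.sum_congr rfl (fun k _ => h2 k), Finset.sum_const]
    simp [ZMod.card, mul_comm]
  rw [h1]
  calc ∑ x : Gp μ d, ∑ k : ZMod μ, G (x + Pi.single j k)
      ≤ ∑ _x : Gp μ d, B := Finset.sum_le_sum (fun x _ => hrow x)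
    _ = (μ : ℝ) ^ d * B := by
        rw [Finset.sum_const, nsmul_eq_mul, Finset.card_univ, card_Gp]

/-- the main coset estimate -/
lemma main_est (v : Gp μ d → ℝ) (j : Fin d) {p : ℝ} (hp1 : 1 ≤ p)
    (hnn : ∀ y : Gp μ d, 0 ≤ 1 + v y)
    (hones : ∀ x : Gp μ d, ∑ k : ZMod μ, (1 + v (x + Pi.single j k)) = (μ : ℝ)) :
    (μ : ℝ) * ∑ x : Gp μ d, |1 + v x| ^ p ≤ (μ : ℝ) ^ d * (μ : ℝ) ^ p := by
  refine main_est_abstract μ d _ j ((μ : ℝ) ^ p) ?_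
  intro x
  exact row_bound μ d v _ hp1 hnn (hones x)

lemma kappaV_le_of_mem (μ d : ℕ) [NeZero μ] (hμ : 2 ≤ μ) {θ : ℝ}
    (hθ : θ ∈ Set.Icc (0 : ℝ) 1) (v : Gp μ d → ℝ) (hv : v ∈ MW (Wgrad μ d)) :
    kappaV (Gp μ d) v θ ≤ Real.log μ * (1 - θ) := by
  obtain ⟨hsum, hge, a, ha0, hW⟩ := hv
  obtain ⟨hg0, f, hf⟩ := hW
  obtain ⟨hθ0, hθ1⟩ := hθ
  have hμ2 : (2 : ℝ) ≤ (μ : ℝ) := by exact_mod_cast hμ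
  have hμpos : (0 : ℝ) < (μ : ℝ) := by linarith
  have hlogμ : 0 ≤ Real.log μ := Real.log_nonneg (by linarith)
  have hja : ∃ j : Fin d, a j ≠ 0 := by
    by_contra h
    push_neg at h
    exact ha0 (by ext j; exact h j)
  obtain ⟨j, hj⟩ := hja
  have hcoset : ∀ x : Gp μ d, ∑ k : ZMod μ, v (x + Pi.single j k) = 0 :=
    coset_sum μ d v a f hf j hj
  have hones : ∀ x : Gp μ d, ∑ k : ZMod μ, (1 + v (x + Pi.single j k)) = (μ : ℝ) := by
    intro x
    rw [Finset.sum_add_distrib, hcoset x, add_zero, Finset.sum_const]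
    simp [ZMod.card]
  have hnn : ∀ y : Gp μ d, 0 ≤ 1 + v y := fun y => by linarith [hge y]
  have hle_mu : ∀ x : Gp μ d, 1 + v x ≤ (μ : ℝ) := by
    intro x
    have h0 : x + Pi.single j (0 : ZMod μ) = x := by simp
    have := Finset.single_le_sum (f := fun k : ZMod μ => 1 + v (x + Pi.single j k))
      (fun k _ => hnn _) (Finset.mem_univ (0 : ZMod μ))
    rw [hones x] at this
    simpa [h0] using this
  have habs : ∀ x : Gp μ d, |1 + v x| = 1 + v x := fun x => abs_of_nonneg (hnn x)
  haveI : Nonempty (Gp μ d) := ⟨0⟩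
  by_cases hθz : θ = 0
  · subst hθz
    rw [kappaV, if_pos rfl]
    have hbdd : BddAbove (Set.range fun x : Gp μ d => |1 + v x|) :=
      Set.Finite.bddAbove (Set.finite_range _)
    have hsup_le : (⨆ x : Gp μ d, |1 + v x|) ≤ (μ : ℝ) :=
      ciSup_le fun x => by rw [habs x]; exact hle_mu x
    have hsup_nn : 0 ≤ ⨆ x : Gp μ d, |1 + v x| :=
      le_trans (abs_nonneg _) (le_ciSup hbdd (Classical.arbitrary _))
    rcases le_or_gt (⨆ x : Gp μ d, |1 + v x|) 1 with h1 | h1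
    · calc Real.log (⨆ x : Gp μ d, |1 + v x|) ≤ 0 := Real.log_nonpos hsup_nn h1
        _ ≤ Real.log μ * (1 - 0) := by simpa using hlogμ
    · calc Real.log (⨆ x : Gp μ d, |1 + v x|) ≤ Real.log μ :=
          Real.log_le_log (by linarith) hsup_le
        _ = Real.log μ * (1 - 0) := by ring
  · have hθpos : 0 < θ := lt_of_le_of_ne hθ0 (Ne.symm hθz)
    have hp1 : 1 ≤ 1 / θ := by rw [le_div_iff₀ hθpos]; linarith
    rw [kappaV, if_neg hθz]
    have hSnn : 0 ≤ ∑ x : Gp μ d, |1 + v x| ^ (1 / θ) :=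
      Finset.sum_nonneg fun x _ => Real.rpow_nonneg (abs_nonneg _) _
    have hmain : (μ : ℝ) * ∑ x : Gp μ d, |1 + v x| ^ (1 / θ)
        ≤ (μ : ℝ) ^ d * (μ : ℝ) ^ (1 / θ) := main_est μ d v j hp1 hnn hones
    have hA : (Fintype.card (Gp μ d) : ℝ)⁻¹ * ∑ x : Gp μ d, |1 + v x| ^ (1 / θ)
        ≤ (μ : ℝ) ^ (1 / θ - 1) := by
      rw [card_Gp]
      have hpd : (0 : ℝ) < (μ : ℝ) ^ d := pow_pos hμpos d
      rw [inv_mul_le_iff₀ hpd, Real.rpow_sub hμpos, Real.rpow_one, ← mul_div_assoc,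
        le_div_iff₀ hμpos]
      calc (∑ x : Gp μ d, |1 + v x| ^ (1 / θ)) * (μ : ℝ)
          = (μ : ℝ) * ∑ x : Gp μ d, |1 + v x| ^ (1 / θ) := by ring
        _ ≤ (μ : ℝ) ^ d * (μ : ℝ) ^ (1 / θ) := hmain
    exact log_step hμ2 hθpos hθ1 rfl
      (mul_nonneg (by positivity) hSnn) hA

/-- the extremal profile -/
noncomputable def wz : ZMod μ → ℝ := fun z => if z = 0 then (μ : ℝ) - 1 else -1
/-- its discrete primitive -/
noncomputable def Fz : ZMod μ → ℝ := fun z => if z = 0 then 0 else (μ : ℝ) - (z.val : ℝ)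

lemma sum_wz : ∑ z : ZMod μ, wz μ z = 0 := by
  have h : ∀ z : ZMod μ, wz μ z = (if z = 0 then (μ : ℝ) else 0) - 1 := by
    intro z; unfold wz; split <;> ring
  rw [Finset.sum_congr rfl (fun z _ => h z), Finset.sum_sub_distrib,
    Finset.sum_ite_eq' Finset.univ (0 : ZMod μ) (fun _ => (μ : ℝ))]
  simp [ZMod.card]

lemma val_one' (hμ : 2 ≤ μ) : (1 : ZMod μ).val = 1 := by
  rw [← Nat.cast_one, ZMod.val_natCast]
  exact Nat.mod_eq_of_lt (by omega)

lemma Fz_step (hμ : 2 ≤ μ) (z : ZMod μ) : Fz μ (z + 1) - Fz μ z = wz μ z := by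
  have hvlt : z.val < μ := ZMod.val_lt z
  by_cases hz : z = 0
  · subst hz
    have h10 : (1 : ZMod μ) ≠ 0 := by
      intro h
      have := val_one' μ hμ
      rw [h, ZMod.val_zero] at this
      omega
    rw [zero_add]
    unfold Fz wz
    rw [if_neg h10, if_pos rfl, if_pos rfl, val_one' μ hμ]
    push_cast; ring
  · have hzv : z.val ≠ 0 := fun h => hz ((ZMod.val_eq_zero z).mp h)
    have hva : (z + 1).val = (z.val + 1) % μ := by
      rw [ZMod.val_add, val_one' μ hμ]
    by_cases hz1 : z + 1 = 0
    · have h0 : (z.val + 1) % μ = 0 := by rw [← hva, hz1, ZMod.val_zero]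
      have h2 : z.val + 1 = μ := by
        rcases Nat.lt_or_ge (z.val + 1) μ with h | h
        · rw [Nat.mod_eq_of_lt h] at h0; omega
        · omega
      have hcast : (z.val : ℝ) = (μ : ℝ) - 1 := by
        have h3 : z.val = μ - 1 := by omega
        rw [h3]; push_cast [Nat.cast_sub (by omega : 1 ≤ μ)]; ring
      unfold Fz wz
      rw [if_pos hz1, if_neg hz, if_neg hz, hcast]
      ring
    · have hlt : z.val + 1 < μ := by
        rcases Nat.lt_or_ge (z.val + 1) μ with h | h
        · exact h
        · exfalso
          have h2 : z.val + 1 = μ := by omega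
          have h0 : (z + 1).val = 0 := by rw [hva, h2, Nat.mod_self]
          exact hz1 ((ZMod.val_eq_zero _).mp h0)
      have hv : (z + 1).val = z.val + 1 := by rw [hva, Nat.mod_eq_of_lt hlt]
      unfold Fz wz
      rw [if_neg hz1, if_neg hz, if_neg hz, hv]
      push_cast; ring

/-- the extremal increment `v` (depending on coordinate `j0` only) -/
noncomputable def vex (j0 : Fin d) : Gp μ d → ℝ := fun x => wz μ (x j0)
/-- its potential -/
noncomputable def fex (j0 : Fin d) : Gp μ d → ℝ := fun x => Fz μ (x j0)

lemma sum_vex (j0 : Fin d) : ∑ x : Gp μ d, vex μ d j0 x = 0 := by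
  have h := fiber_sum μ d j0 (fun z => wz μ z)
  simp only [sum_wz μ, mul_zero] at h
  have hμ0 : (μ : ℝ) ≠ 0 := by
    have : (0 : ℝ) < μ := by exact_mod_cast Nat.pos_of_ne_zero (NeZero.ne μ)
    linarith
  have := mul_eq_zero.mp h
  unfold vex
  tauto

lemma vex_mem (hμ : 2 ≤ μ) (j0 : Fin d) : vex μ d j0 ∈ MW (Wgrad μ d) := by
  refine ⟨sum_vex μ d j0, ?_, EuclideanSpace.single j0 (1 : ℂ), ?_, ?_, ?_⟩
  · intro x
    unfold vex wz
    split
    · have : (2 : ℝ) ≤ μ := by exact_mod_cast hμ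
      linarith
    · exact le_refl _
  · intro h
    have h0 : (EuclideanSpace.single j0 (1 : ℂ)) j0 = 0 := by rw [h]; rfl
    rw [EuclideanSpace.single_apply, if_pos rfl] at h0
    exact one_ne_zero h0
  · show ∑ x : Gp μ d, vex μ d j0 x • EuclideanSpace.single j0 (1 : ℂ) = 0
    rw [← Finset.sum_smul, sum_vex μ d j0, zero_smul]
  · refine ⟨fex μ d j0, ?_⟩
    intro x jj
    show (vex μ d j0 x • EuclideanSpace.single j0 (1 : ℂ)) jj
      = (fex μ d j0 (x + egen μ d jj) : ℂ) - (fex μ d j0 x : ℂ)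
    rw [PiLp.smul_apply, EuclideanSpace.single_apply]
    by_cases hjj : jj = j0
    · subst hjj
      rw [if_pos rfl]
      have hco : (x + egen μ d jj) jj = x jj + 1 := by
        rw [egen, Pi.add_apply, Pi.single_eq_same]
      unfold fex vex
      rw [hco, Complex.real_smul, mul_one, ← Complex.ofReal_sub, Fz_step μ hμ]
    · rw [if_neg hjj, smul_zero]
      have hco : (x + egen μ d jj) j0 = x j0 := by
        rw [egen, Pi.add_apply, Pi.single_eq_of_ne (fun h => hjj h.symm), add_zero]
      unfold fex
      rw [hco, sub_self]

lemma one_add_wz (hμ : 2 ≤ μ) (z : ZMod μ) :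
    1 + wz μ z = if z = 0 then (μ : ℝ) else 0 := by
  unfold wz; split <;> ring

lemma kappaV_ex (hμ : 2 ≤ μ) (j0 : Fin d) {θ : ℝ} (hθ : θ ∈ Set.Icc (0 : ℝ) 1) :
    kappaV (Gp μ d) (vex μ d j0) θ = Real.log μ * (1 - θ) := by
  obtain ⟨hθ0, hθ1⟩ := hθ
  have hμ2 : (2 : ℝ) ≤ (μ : ℝ) := by exact_mod_cast hμ
  have hμpos : (0 : ℝ) < (μ : ℝ) := by linarith
  haveI : Nonempty (Gp μ d) := ⟨0⟩
  by_cases hθz : θ = 0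
  · subst hθz
    rw [kappaV, if_pos rfl]
    have hval : ∀ x : Gp μ d, |1 + vex μ d j0 x| = if x j0 = 0 then (μ : ℝ) else 0 := by
      intro x
      unfold vex
      rw [one_add_wz μ hμ]
      split
      · exact abs_of_nonneg (by linarith)
      · exact abs_zero
    have hsup : (⨆ x : Gp μ d, |1 + vex μ d j0 x|) = (μ : ℝ) := by
      apply le_antisymm
      · apply ciSup_le
        intro x
        rw [hval x]
        split
        · exact le_refl _
        · linarith
      · have hbdd : BddAbove (Set.range fun x : Gp μ d => |1 + vex μ d j0 x|) :=
          Set.Finite.bddAbove (Set.finite_range _)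
        have h0 : |1 + vex μ d j0 (0 : Gp μ d)| = (μ : ℝ) := by
          rw [hval 0]
          simp
        calc (μ : ℝ) = |1 + vex μ d j0 (0 : Gp μ d)| := h0.symm
          _ ≤ ⨆ x : Gp μ d, |1 + vex μ d j0 x| := le_ciSup hbdd _
    rw [hsup]; ring
  · have hθpos : 0 < θ := lt_of_le_of_ne hθ0 (Ne.symm hθz)
    have hione : 1 / θ ≠ 0 := one_div_ne_zero hθz
    rw [kappaV, if_neg hθz]
    have hz : ∑ z : ZMod μ, |1 + wz μ z| ^ (1 / θ) = (μ : ℝ) ^ (1 / θ) := by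
      have h : ∀ z : ZMod μ, |1 + wz μ z| ^ (1 / θ)
          = if z = 0 then (μ : ℝ) ^ (1 / θ) else 0 := by
        intro z
        rw [one_add_wz μ hμ]
        split
        · rw [abs_of_nonneg (by linarith)]
        · rw [abs_zero, Real.zero_rpow hione]
      rw [Finset.sum_congr rfl (fun z _ => h z),
        Finset.sum_ite_eq' Finset.univ (0 : ZMod μ) (fun _ => (μ : ℝ) ^ (1 / θ))]
      simp
    have hfs := fiber_sum μ d j0 (fun z => |1 + wz μ z| ^ (1 / θ))
    simp only [hz] at hfs
    have hsum : ∑ x : Gp μ d, |1 + vex μ d j0 x| ^ (1 / θ)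
        = (μ : ℝ) ^ d * (μ : ℝ) ^ (1 / θ) / μ := by
      unfold vex
      field_simp
      linarith [hfs]
    rw [hsum, card_Gp]
    have hpow : ((μ : ℝ) ^ d : ℝ)⁻¹ * ((μ : ℝ) ^ d * (μ : ℝ) ^ (1 / θ) / μ)
        = (μ : ℝ) ^ (1 / θ - 1) := by
      rw [Real.rpow_sub hμpos, Real.rpow_one]
      have : ((μ : ℝ) ^ d) ≠ 0 := by positivity
      field_simp
    rw [hpow, Real.log_rpow hμpos]
    field_simp

end Aux

/-- the space `W_∇` is a geometric space of order `1/d`: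
`κ(θ) = (1/d)(log m)(1-θ) = (log μ)(1-θ)` on `[0,1]`. -/
theorem statement10 (μ d : ℕ) [NeZero μ] (hμ : 2 ≤ μ) (hd : 1 ≤ d) :
    ∀ θ ∈ Set.Icc (0 : ℝ) 1,
      kappa (Wgrad μ d) θ = (d : ℝ)⁻¹ * Real.log ((μ : ℝ) ^ d) * (1 - θ) := by
  intro θ hθ
  have hd0 : (d : ℝ) ≠ 0 := Nat.cast_ne_zero.mpr (by omega)
  have hRHS : (d : ℝ)⁻¹ * Real.log ((μ : ℝ) ^ d) * (1 - θ) = Real.log μ * (1 - θ) := by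
    rw [Real.log_pow]
    field_simp
  rw [hRHS]
  have j0 : Fin d := ⟨0, hd⟩
  have hmem := vex_mem μ d hμ j0
  have hval := kappaV_ex μ d hμ j0 hθ
  unfold kappa
  apply le_antisymm
  · refine csSup_le ⟨kappaV (Gp μ d) (vex μ d j0) θ, ⟨vex μ d j0, hmem, rfl⟩⟩ ?_
    rintro r ⟨v, hv, rfl⟩
    exact kappaV_le_of_mem μ d hμ hθ v hv
  · apply le_csSup
    · refine ⟨Real.log μ * (1 - θ), ?_⟩
      rintro r ⟨v, hv, rfl⟩
      exact kappaV_le_of_mem μ d hμ hθ v hv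
    · exact ⟨vex μ d j0, hmem, hval.symm⟩

end TracePaper
end
end
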